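/- arXiv:2205.15498 — 7 statements merged into one kernel-verified Lean document; each statement's English description precedes it below -/
import Mathlib

section
/- Let p be a prime with p ≡ 5 (mod 24) and let a ∈ {1,−1}. Then the ternary self-dual code NV^(a)(p) of length 2(p+1) contains 2(p+1) distinct codewords, each of weight 2(p+1), such that the 2(p+1) × 2(p+1) integer matrix whose rows are these codewords (identifying the elements 0, 1, 2 of 𝔽₃ with the integers 0, 1, −1) is a Hadamard matrix of order 2(p+1). -/
open Matrix

/-- Entry `χ(c)` where `b - a = c²` is a nonzero square (value `1` if `c` can be chosen a
square, i.e. `b - a` is a nonzero fourth power, `-1` if `b - a` is a nonzero square that is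
not a fourth power, and `0` otherwise). -/
def RX (p : ℕ) [NeZero p] : Matrix (ZMod p) (ZMod p) ℤ :=
  Matrix.of fun a b =>
    if ∃ c : ZMod p, c ≠ 0 ∧ c ^ 2 = b - a ∧ ∃ d : ZMod p, d ^ 2 = c then 1
    else if ∃ c : ZMod p, c ≠ 0 ∧ c ^ 2 = b - a then -1
    else 0

def RY (p : ℕ) [NeZero p] : Matrix (ZMod p) (ZMod p) ℤ :=
  Matrix.of fun a b =>
    if ∃ c : ZMod p, c ≠ 0 ∧ c ^ 2 = 2 * (b - a) ∧ ∃ d : ZMod p, d ^ 2 = c then 1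
    else if ∃ c : ZMod p, c ≠ 0 ∧ c ^ 2 = 2 * (b - a) then -1
    else 0

def Xmat (p : ℕ) [NeZero p] : Matrix (Option (ZMod p)) (Option (ZMod p)) ℤ :=
  Matrix.of fun i j =>
    match i, j with
    | none, none => 0
    | none, some _ => 1
    | some _, none => -1
    | some a, some b => RX p a b

def Ymat (p : ℕ) [NeZero p] : Matrix (Option (ZMod p)) (Option (ZMod p)) ℤ :=
  Matrix.of fun i j =>
    match i, j with
    | none, _ => 0
    | some _, none => 0
    | some a, some b => RY p a b

/-- Index set of the length `2(p+1)` code. -/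
abbrev NVIdx (p : ℕ) := Option (ZMod p) ⊕ Option (ZMod p)

def Bw (p : ℕ) [NeZero p] : Matrix (NVIdx p) (NVIdx p) ℤ :=
  Matrix.fromBlocks (Xmat p) (Ymat p) (-(Ymat p)ᵀ) (Xmat p)ᵀ

/-- Generator matrix `a I + B_w` (over `ℤ`). -/
def NVgen (p : ℕ) [NeZero p] (a : ℤ) : Matrix (NVIdx p) (NVIdx p) ℤ :=
  a • (1 : Matrix (NVIdx p) (NVIdx p) ℤ) + Bw p

/-- The ternary code `NV^(a)(p)`: the row space over `𝔽₃` of `a I + B_w` reduced mod 3. -/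
def NVcode (p : ℕ) [NeZero p] (a : ℤ) : Submodule (ZMod 3) (NVIdx p → ZMod 3) :=
  Submodule.span (ZMod 3) (Set.range fun i => ((NVgen p a).map (Int.cast : ℤ → ZMod 3)) i)

/-- The matrix `H_{NV^(a)(p)}`. -/
def Hnv (p : ℕ) [NeZero p] (a : ℤ) : Matrix (NVIdx p) (NVIdx p) ℤ :=
  Matrix.fromBlocks
    (Xmat p - (Ymat p)ᵀ + a • 1) (Ymat p + (Xmat p)ᵀ + a • 1)
    (-(Ymat p)ᵀ - Xmat p - a • 1) ((Xmat p)ᵀ - Ymat p + a • 1)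

/-- Weight of a ternary vector: the number of nonzero coordinates. -/
def wt {ι : Type*} [Fintype ι] (v : ι → ZMod 3) : ℕ :=
  (Finset.univ.filter fun i => v i ≠ 0).card

/-- `H` is a Hadamard matrix of order `n`. -/
def IsHadamard {ι : Type*} [Fintype ι] [DecidableEq ι] (n : ℕ) (H : Matrix ι ι ℤ) : Prop :=
  (∀ i j, H i j = 1 ∨ H i j = -1) ∧ H * Hᵀ = (n : ℤ) • (1 : Matrix ι ι ℤ)

/-- The identification `0 ↦ 0`, `1 ↦ 1`, `2 ↦ -1` of `𝔽₃` with `{0, 1, -1} ⊆ ℤ`. -/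
def rho (x : ZMod 3) : ℤ := if x = 0 then 0 else if x = 1 then 1 else -1

namespace NVAux


open Finset

variable {p : ℕ} [Fact p.Prime]

def psi (p : ℕ) [Fact p.Prime] (x : ZMod p) : ℤ :=
  if x ^ (p / 4) = 1 then 1 else if x ^ (p / 4) = -1 then -1 else 0

def chi4 (p : ℕ) [Fact p.Prime] (w : ZMod p) (x : ZMod p) : GaussianInt :=
  if x ^ (p / 4) = 1 then 1
  else if x ^ (p / 4) = -1 then -1
  else if x ^ (p / 4) = w then Zsqrtd.sqrtd
  else if x ^ (p / 4) = -w then -Zsqrtd.sqrtd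
  else 0

section five

variable (hp5 : p % 8 = 5)
include hp5

lemma p_ne2 : p ≠ 2 := by omega

lemma p_big : 5 ≤ p := by
  have h := (Fact.out : p.Prime).two_le; omega

lemma one_ne_negone : (1 : ZMod p) ≠ -1 := by
  intro h
  have h2 : ((2 : ℕ) : ZMod p) = 0 := by push_cast; linear_combination h
  rw [ZMod.natCast_eq_zero_iff] at h2
  have := Nat.le_of_dvd (by norm_num) h2
  have := p_big hp5
  omega

omit hp5 in
/-- `x²=1` in a field gives `x = ±1`. -/
lemma sq_one {F : Type*} [Field F] {x : F} (h : x ^ 2 = 1) : x = 1 ∨ x = -1 := by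
  have : (x - 1) * (x + 1) = 0 := by linear_combination h
  rcases mul_eq_zero.1 this with h | h
  · left; linear_combination h
  · right; linear_combination h

lemma eta_pow4 {x : ZMod p} (hx : x ≠ 0) : ((x ^ (p / 4)) ^ 2) ^ 2 = 1 := by
  have h : ((x ^ (p / 4)) ^ 2) ^ 2 = x ^ (p - 1) := by
    rw [← pow_mul, ← pow_mul]; congr 1; omega
  rw [h, ZMod.pow_card_sub_one_eq_one hx]

lemma eta_sq {x : ZMod p} : (x ^ (p / 4)) ^ 2 = x ^ (p / 2) := by
  rw [← pow_mul]; congr 1; omega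

/-- classification of the fourth-power residue symbol -/
lemma eta_cases {w : ZMod p} (hw : w * w = -1) {x : ZMod p} (hx : x ≠ 0) :
    x ^ (p / 4) = 1 ∨ x ^ (p / 4) = -1 ∨ x ^ (p / 4) = w ∨ x ^ (p / 4) = -w := by
  rcases sq_one (eta_pow4 hp5 hx) with h | h
  · rcases sq_one h with h1 | h1
    · exact Or.inl h1
    · exact Or.inr (Or.inl h1)
  · have h0 : (x ^ (p / 4) - w) * (x ^ (p / 4) + w) = 0 := by
      linear_combination h - hw
    rcases mul_eq_zero.1 h0 with h2 | h2
    · exact Or.inr <| Or.inr <| Or.inl (by linear_combination h2)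
    · exact Or.inr <| Or.inr <| Or.inr (by linear_combination h2)

lemma w_facts {w : ZMod p} (hw : w * w = -1) :
    w ≠ 1 ∧ w ≠ -1 ∧ -w ≠ 1 ∧ -w ≠ -1 ∧ w ≠ -w ∧ w ≠ 0 := by
  have h1 : (1 : ZMod p) ≠ -1 := one_ne_negone hp5
  have hw0 : w ≠ 0 := by rintro rfl; exact h1 (by linear_combination 2 * hw)
  have hwn1 : w ≠ 1 := by rintro rfl; exact h1 (by linear_combination hw)
  have hwn2 : w ≠ -1 := by
    rintro rfl; exact h1 (by linear_combination hw)
  refine ⟨hwn1, hwn2, ?_, ?_, ?_, hw0⟩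
  · intro h; exact hwn2 (by linear_combination -h)
  · intro h; exact hwn1 (by linear_combination -h)
  · intro h
    have h2 : (1 + 1 : ZMod p) * w = 0 := by linear_combination h
    rcases mul_eq_zero.1 h2 with h3 | h3
    · exact h1 (by linear_combination h3)
    · exact hw0 h3

lemma eta_neg_one : (-1 : ZMod p) ^ (p / 4) = -1 := by
  have h : Odd (p / 4) := ⟨p / 8, by omega⟩
  exact h.neg_one_pow

lemma two_ne_zero' : (2 : ZMod p) ≠ 0 := by
  intro h
  have h2 : ((2 : ℕ) : ZMod p) = 0 := by push_cast; exact h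
  rw [ZMod.natCast_eq_zero_iff] at h2
  have := Nat.le_of_dvd (by norm_num) h2
  have := p_big hp5
  omega

lemma eta_two {w : ZMod p} (hw : w * w = -1) :
    (2 : ZMod p) ^ (p / 4) = w ∨ (2 : ZMod p) ^ (p / 4) = -w := by
  have h2 := two_ne_zero' hp5
  have hns : ¬ IsSquare (2 : ZMod p) := by
    rw [ZMod.exists_sq_eq_two_iff (p_ne2 hp5)]; omega
  have hchi : (2 : ZMod p) ^ (p / 2) ≠ 1 := fun h =>
    hns ((ZMod.euler_criterion p h2).2 h)
  rcases eta_cases hp5 hw h2 with h | h | h | h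
  · exact absurd (by rw [← eta_sq hp5, h]; norm_num) hchi
  · exact absurd (by rw [← eta_sq hp5, h]; norm_num) hchi
  · exact Or.inl h
  · exact Or.inr h

-- ### Gaussian integer helpers

omit hp5 in
lemma sqd : (Zsqrtd.sqrtd : GaussianInt) * Zsqrtd.sqrtd = -1 := by
  rw [Zsqrtd.dmuld]; norm_num

omit hp5 in
lemma star_sqd : star (Zsqrtd.sqrtd : GaussianInt) = -Zsqrtd.sqrtd := by
  ext <;> simp [Zsqrtd.re_star, Zsqrtd.im_star]

-- ### chi4 evaluation

variable {w : ZMod p} (hw : w * w = -1)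
include hw

lemma chi4_eval_one {x : ZMod p} (h : x ^ (p / 4) = 1) : chi4 p w x = 1 := by
  rw [chi4, if_pos h]

lemma chi4_eval_neg_one {x : ZMod p} (h : x ^ (p / 4) = -1) : chi4 p w x = -1 := by
  rw [chi4, if_neg (by rw [h]; exact fun hc => one_ne_negone hp5 hc.symm), if_pos h]

lemma chi4_eval_w {x : ZMod p} (h : x ^ (p / 4) = w) : chi4 p w x = Zsqrtd.sqrtd := by
  obtain ⟨h1, h2, h3, h4, h5, h0⟩ := w_facts hp5 hw
  rw [chi4, if_neg (by rw [h]; exact h1), if_neg (by rw [h]; exact h2), if_pos h]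

lemma chi4_eval_neg_w {x : ZMod p} (h : x ^ (p / 4) = -w) : chi4 p w x = -Zsqrtd.sqrtd := by
  obtain ⟨h1, h2, h3, h4, h5, h0⟩ := w_facts hp5 hw
  rw [chi4, if_neg (by rw [h]; exact h3), if_neg (by rw [h]; exact h4),
    if_neg (by rw [h]; exact fun hc => h5 hc.symm), if_pos h]

omit hw in
lemma eta_zero : (0 : ZMod p) ^ (p / 4) = 0 := by
  apply zero_pow; have := p_big hp5; omega

lemma chi4_zero : chi4 p w 0 = 0 := by
  obtain ⟨h1, h2, h3, h4, h5, h0⟩ := w_facts hp5 hw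
  have h1' : (1 : ZMod p) ≠ 0 := one_ne_zero
  rw [chi4, eta_zero hp5]
  rw [if_neg (fun hc => h1' hc.symm), if_neg, if_neg (fun hc => h0 hc.symm), if_neg]
  · intro hc; exact h0 (neg_eq_zero.mp hc.symm)
  · intro hc; exact h1' (neg_eq_zero.mp hc.symm ▸ by simpa using congrArg Neg.neg hc)

omit hw in
lemma psi_zero : psi p (0 : ZMod p) = 0 := by
  have h1' : (1 : ZMod p) ≠ 0 := one_ne_zero
  rw [psi, eta_zero hp5, if_neg (fun hc => h1' hc.symm), if_neg]
  intro hc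
  exact one_ne_negone hp5 (by linear_combination 2 * hc)

lemma chi4_mul (x y : ZMod p) : chi4 p w (x * y) = chi4 p w x * chi4 p w y := by
  by_cases hx : x = 0
  · rw [hx, zero_mul, chi4_zero hp5 hw, zero_mul]
  by_cases hy : y = 0
  · rw [hy, mul_zero, chi4_zero hp5 hw, mul_zero]
  have e : (x * y) ^ (p / 4) = x ^ (p / 4) * y ^ (p / 4) := mul_pow x y (p / 4)
  rcases eta_cases hp5 hw hx with h1 | h1 | h1 | h1 <;>
    rcases eta_cases hp5 hw hy with h2 | h2 | h2 | h2
  · rw [chi4_eval_one hp5 hw (by rw [e, h1, h2]; ring), chi4_eval_one hp5 hw h1,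
      chi4_eval_one hp5 hw h2]; ring
  · rw [chi4_eval_neg_one hp5 hw (by rw [e, h1, h2]; ring), chi4_eval_one hp5 hw h1,
      chi4_eval_neg_one hp5 hw h2]; ring
  · rw [chi4_eval_w hp5 hw (by rw [e, h1, h2]; ring), chi4_eval_one hp5 hw h1,
      chi4_eval_w hp5 hw h2]; ring
  · rw [chi4_eval_neg_w hp5 hw (by rw [e, h1, h2]; ring), chi4_eval_one hp5 hw h1,
      chi4_eval_neg_w hp5 hw h2]; ring
  · rw [chi4_eval_neg_one hp5 hw (by rw [e, h1, h2]; ring), chi4_eval_neg_one hp5 hw h1,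
      chi4_eval_one hp5 hw h2]; ring
  · rw [chi4_eval_one hp5 hw (by rw [e, h1, h2]; ring), chi4_eval_neg_one hp5 hw h1,
      chi4_eval_neg_one hp5 hw h2]; ring
  · rw [chi4_eval_neg_w hp5 hw (by rw [e, h1, h2]; ring), chi4_eval_neg_one hp5 hw h1,
      chi4_eval_w hp5 hw h2]; ring
  · rw [chi4_eval_w hp5 hw (by rw [e, h1, h2]; ring), chi4_eval_neg_one hp5 hw h1,
      chi4_eval_neg_w hp5 hw h2]; ring
  · rw [chi4_eval_w hp5 hw (by rw [e, h1, h2]; ring), chi4_eval_w hp5 hw h1,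
      chi4_eval_one hp5 hw h2]; ring
  · rw [chi4_eval_neg_w hp5 hw (by rw [e, h1, h2]; ring), chi4_eval_w hp5 hw h1,
      chi4_eval_neg_one hp5 hw h2]; ring
  · rw [chi4_eval_neg_one hp5 hw (by rw [e, h1, h2]; linear_combination hw),
      chi4_eval_w hp5 hw h1, chi4_eval_w hp5 hw h2, sqd]
  · rw [chi4_eval_one hp5 hw (by rw [e, h1, h2]; linear_combination -hw),
      chi4_eval_w hp5 hw h1, chi4_eval_neg_w hp5 hw h2, mul_neg, sqd]; ring
  · rw [chi4_eval_neg_w hp5 hw (by rw [e, h1, h2]; ring), chi4_eval_neg_w hp5 hw h1,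
      chi4_eval_one hp5 hw h2]; ring
  · rw [chi4_eval_w hp5 hw (by rw [e, h1, h2]; ring), chi4_eval_neg_w hp5 hw h1,
      chi4_eval_neg_one hp5 hw h2]; ring
  · rw [chi4_eval_one hp5 hw (by rw [e, h1, h2]; linear_combination -hw),
      chi4_eval_neg_w hp5 hw h1, chi4_eval_w hp5 hw h2, neg_mul, sqd]; ring
  · rw [chi4_eval_neg_one hp5 hw (by rw [e, h1, h2]; linear_combination hw),
      chi4_eval_neg_w hp5 hw h1, chi4_eval_neg_w hp5 hw h2, neg_mul_neg, sqd]

lemma chi4_star_mul {x : ZMod p} (hx : x ≠ 0) : chi4 p w x * star (chi4 p w x) = 1 := by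
  rcases eta_cases hp5 hw hx with h | h | h | h
  · rw [chi4_eval_one hp5 hw h]; simp
  · rw [chi4_eval_neg_one hp5 hw h]; simp
  · rw [chi4_eval_w hp5 hw h, star_sqd]
    rw [mul_neg, sqd, neg_neg]
  · rw [chi4_eval_neg_w hp5 hw h, star_neg, star_sqd, neg_neg]
    rw [neg_mul, sqd, neg_neg]

lemma chi4_ne_zero {x : ZMod p} (hx : x ≠ 0) : chi4 p w x ≠ 0 := by
  intro h
  have := chi4_star_mul hp5 hw hx
  rw [h, zero_mul] at this
  exact zero_ne_one this

lemma chi4_one : chi4 p w 1 = 1 := chi4_eval_one hp5 hw (one_pow _)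

lemma chi4_neg_one : chi4 p w (-1) = -1 := chi4_eval_neg_one hp5 hw (eta_neg_one hp5)

lemma chi4_inv {x : ZMod p} (hx : x ≠ 0) : chi4 p w x⁻¹ = star (chi4 p w x) := by
  apply mul_left_cancel₀ (chi4_ne_zero hp5 hw hx)
  rw [← chi4_mul hp5 hw, mul_inv_cancel₀ hx, chi4_one hp5 hw, chi4_star_mul hp5 hw hx]

lemma chi4_add_star (x : ZMod p) :
    chi4 p w x + star (chi4 p w x) = 2 * ((psi p x : ℤ) : GaussianInt) := by
  by_cases hx : x = 0
  · rw [hx, chi4_zero hp5 hw, psi_zero hp5]; simp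
  rcases eta_cases hp5 hw hx with h | h | h | h
  · rw [chi4_eval_one hp5 hw h, psi, if_pos h, star_one]; norm_num
  · rw [chi4_eval_neg_one hp5 hw h, psi,
      if_neg (by rw [h]; exact fun hc => one_ne_negone hp5 hc.symm), if_pos h]
    rw [star_neg, star_one]; push_cast; ring
  · obtain ⟨h1, h2, _, _, _, _⟩ := w_facts hp5 hw
    rw [chi4_eval_w hp5 hw h, star_sqd, psi, if_neg (by rw [h]; exact h1),
      if_neg (by rw [h]; exact h2)]
    simp
  · obtain ⟨_, _, h3, h4, _, _⟩ := w_facts hp5 hw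
    rw [chi4_eval_neg_w hp5 hw h, star_neg, star_sqd, psi, if_neg (by rw [h]; exact h3),
      if_neg (by rw [h]; exact h4)]
    simp

-- ### the bridge between the matrix entries and `psi`

omit hw in
lemma psi_spec (t : ZMod p) :
    (if ∃ c : ZMod p, c ≠ 0 ∧ c ^ 2 = t ∧ ∃ d : ZMod p, d ^ 2 = c then (1 : ℤ)
      else if ∃ c : ZMod p, c ≠ 0 ∧ c ^ 2 = t then -1 else 0) = psi p t := by
  by_cases ht : t = 0
  · subst ht
    rw [if_neg, if_neg, psi_zero hp5]
    · rintro ⟨c, hc0, hc2⟩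
      exact hc0 ((pow_eq_zero_iff (two_ne_zero)).mp hc2)
    · rintro ⟨c, hc0, hc2, _⟩
      exact hc0 ((pow_eq_zero_iff (two_ne_zero)).mp hc2)
  · by_cases hs : ∃ c : ZMod p, c ≠ 0 ∧ c ^ 2 = t
    · obtain ⟨c, hc0, hc2⟩ := hs
      have heta : t ^ (p / 4) = c ^ (p / 2) := by
        rw [← hc2, ← pow_mul]; congr 1; omega
      have hcsq : (c ^ (p / 2)) ^ 2 = 1 := by
        rw [← pow_mul]
        have e : p / 2 * 2 = p - 1 := by omega
        rw [e]; exact ZMod.pow_card_sub_one_eq_one hc0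
      have hev : Even (p / 2) := ⟨2 * (p / 8) + 1, by omega⟩
      rcases sq_one hcsq with hchi | hchi
      · obtain ⟨d, hd⟩ := (ZMod.euler_criterion p hc0).mpr hchi
        rw [if_pos ⟨c, hc0, hc2, d, by rw [pow_two]; exact hd.symm⟩, psi,
          if_pos (by rw [heta, hchi])]
      · rw [if_neg, if_pos ⟨c, hc0, hc2⟩, psi, if_neg, if_pos (by rw [heta, hchi])]
        · rw [heta, hchi]; exact fun hc => one_ne_negone hp5 hc.symm
        · rintro ⟨c', h0', h2', d, hd⟩
          have hcc' : (c' - c) * (c' + c) = 0 := by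
            have h := h2'.trans hc2.symm
            linear_combination h
          have hpow : c' ^ (p / 2) = c ^ (p / 2) := by
            rcases mul_eq_zero.1 hcc' with h | h
            · have h' : c' = c := by linear_combination h
              rw [h']
            · have h' : c' = -c := by linear_combination h
              rw [h', hev.neg_pow]
          have hd0 : d ≠ 0 := by rintro rfl; exact h0' (by rw [← hd]; ring)
          have hd1 : c' ^ (p / 2) = 1 := by
            rw [← hd, ← pow_mul]
            have e : 2 * (p / 2) = p - 1 := by omega
            rw [e]; exact ZMod.pow_card_sub_one_eq_one hd0
          rw [hpow, hchi] at hd1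
          exact one_ne_negone hp5 hd1.symm
    · have hns : ¬ IsSquare t := by
        rintro ⟨r, hr⟩
        have hr0 : r ≠ 0 := by rintro rfl; exact ht (by rw [hr]; ring)
        exact hs ⟨r, hr0, by rw [pow_two]; exact hr.symm⟩
      have hchi : t ^ (p / 2) ≠ 1 := fun h => hns ((ZMod.euler_criterion p ht).mpr h)
      rw [if_neg, if_neg hs, psi, if_neg, if_neg]
      · intro h; exact hchi (by rw [← eta_sq hp5, h]; ring)
      · intro h; exact hchi (by rw [← eta_sq hp5, h]; ring)
      · rintro ⟨c, hc0, hc2, _⟩; exact hs ⟨c, hc0, hc2⟩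

omit hw in
lemma psi_neg (x : ZMod p) : psi p (-x) = -psi p x := by
  have h1n := one_ne_negone hp5
  have hodd : Odd (p / 4) := ⟨p / 8, by omega⟩
  have e : (-x) ^ (p / 4) = -x ^ (p / 4) := hodd.neg_pow x
  by_cases h1 : x ^ (p / 4) = 1
  · have c1 : (-1 : ZMod p) ≠ 1 := fun hc => h1n hc.symm
    simp [psi, e, h1, c1]
  · by_cases h2 : x ^ (p / 4) = -1
    · have c1 : (-1 : ZMod p) ≠ 1 := fun hc => h1n hc.symm
      simp [psi, e, h2, neg_neg, h1n, h1, c1]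
    · have c1 : -x ^ (p / 4) ≠ 1 := fun hc => h2 (by linear_combination -hc)
      have c2 : -x ^ (p / 4) ≠ -1 := fun hc => h1 (by linear_combination -hc)
      simp [psi, e, c1, c2, h1, h2]

omit hw in
lemma psi_sum_zero : ∑ t : ZMod p, psi p t = 0 := by
  have h := Equiv.sum_comp (Equiv.neg (ZMod p)) (psi p)
  simp only [Equiv.neg_apply] at h
  have h2 : ∑ t : ZMod p, psi p (-t) = -∑ t : ZMod p, psi p t := by
    rw [← Finset.sum_neg_distrib]
    exact Finset.sum_congr rfl fun t _ => psi_neg hp5 t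
  linarith [h, h2]

-- ### character sums

lemma sqrtd_ne_one : (Zsqrtd.sqrtd : GaussianInt) ≠ 1 := by
  intro h
  have := congrArg Zsqrtd.im h
  simp at this

lemma sum_chi4_zero : ∑ x : ZMod p, chi4 p w x = 0 := by
  have h2 := two_ne_zero' hp5
  have h := Equiv.sum_comp (Equiv.mulLeft₀ (2 : ZMod p) h2) (chi4 p w)
  simp only [Equiv.mulLeft₀_apply] at h
  have h' : ∑ x : ZMod p, chi4 p w (2 * x) = chi4 p w 2 * ∑ x : ZMod p, chi4 p w x := by
    rw [Finset.mul_sum]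
    exact Finset.sum_congr rfl fun x _ => chi4_mul hp5 hw 2 x
  rw [h'] at h
  have hfac : (chi4 p w 2 - 1) * ∑ x : ZMod p, chi4 p w x = 0 := by
    rw [sub_mul, one_mul, h, sub_self]
  rcases mul_eq_zero.1 hfac with hz | hz
  · exfalso
    have hone : chi4 p w 2 ≠ 1 := by
      rcases eta_two hp5 hw with h | h
      · rw [chi4_eval_w hp5 hw h]; exact sqrtd_ne_one hp5 hw
      · rw [chi4_eval_neg_w hp5 hw h]
        intro hc
        have := congrArg Zsqrtd.im hc
        simp at this
    exact hone (by linear_combination hz)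
  · exact hz

lemma sum_chi4_norm :
    ∑ x : ZMod p, chi4 p w x * star (chi4 p w x) = ((p : ℤ) - 1 : ℤ) := by
  have step : ∀ x : ZMod p, chi4 p w x * star (chi4 p w x)
      = if x = (0 : ZMod p) then 0 else 1 := by
    intro x
    by_cases hx : x = 0
    · rw [if_pos hx, hx, chi4_zero hp5 hw, zero_mul]
    · rw [if_neg hx, chi4_star_mul hp5 hw hx]
  calc ∑ x : ZMod p, chi4 p w x * star (chi4 p w x)
      = ∑ x : ZMod p, ((1 : GaussianInt) - if x = (0 : ZMod p) then 1 else 0) := by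
        apply Finset.sum_congr rfl
        intro x _
        rw [step x]; split_ifs <;> ring
    _ = ((p : ℤ) - 1 : ℤ) := by
        rw [Finset.sum_sub_distrib, Finset.sum_const, Finset.sum_ite_eq' Finset.univ
          (0 : ZMod p) (fun _ => (1 : GaussianInt)), if_pos (Finset.mem_univ _),
          Finset.card_univ, ZMod.card]
        push_cast
        ring

lemma jacobi : ∑ u : ZMod p, chi4 p w u * star (chi4 p w (1 - u)) = 1 := by
  have h1n := one_ne_negone hp5
  classical
  set f : ZMod p → GaussianInt := fun u => chi4 p w u * star (chi4 p w (1 - u)) with hf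
  have hsub : ((Finset.univ.erase (1 : ZMod p)).erase 0) ⊆ Finset.univ := Finset.subset_univ _
  have hvanish : ∀ x ∈ Finset.univ, x ∉ ((Finset.univ.erase (1 : ZMod p)).erase 0) → f x = 0 := by
    intro x _ hx
    simp only [Finset.mem_erase, Finset.mem_univ, and_true, not_and_or, not_not] at hx
    rcases hx with hx | hx
    · rw [hf]; simp only; rw [hx, chi4_zero hp5 hw, zero_mul]
    · rw [hf]; simp only; rw [hx, sub_self, chi4_zero hp5 hw, star_zero, mul_zero]
  rw [← Finset.sum_subset hsub hvanish]
  have hstep : ∀ u ∈ ((Finset.univ.erase (1 : ZMod p)).erase 0),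
      f u = chi4 p w (u * (1 - u)⁻¹) := by
    intro u hu
    simp only [Finset.mem_erase, Finset.mem_univ, and_true] at hu
    obtain ⟨h0, h1'⟩ := hu
    have h1u : (1 : ZMod p) - u ≠ 0 := sub_ne_zero.2 (fun h => h1' h.symm)
    rw [hf]; simp only
    rw [chi4_mul hp5 hw, chi4_inv hp5 hw h1u]
  have hbij : ∑ u ∈ ((Finset.univ.erase (1 : ZMod p)).erase 0), chi4 p w (u * (1 - u)⁻¹)
      = ∑ v ∈ ((Finset.univ.erase (-1 : ZMod p)).erase 0), chi4 p w v := by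
    apply Finset.sum_nbij' (fun u => u * (1 - u)⁻¹) (fun v => v * (1 + v)⁻¹)
    · intro u hu
      simp only [Finset.mem_erase, Finset.mem_univ, and_true] at hu ⊢
      obtain ⟨h0, h1'⟩ := hu
      have h1u : (1 : ZMod p) - u ≠ 0 := sub_ne_zero.2 (fun h => h1' h.symm)
      refine ⟨mul_ne_zero h0 (inv_ne_zero h1u), ?_⟩
      intro hc
      field_simp at hc
      exact one_ne_zero (by linear_combination hc)
    · intro v hv
      simp only [Finset.mem_erase, Finset.mem_univ, and_true] at hv ⊢
      obtain ⟨h0, hv1⟩ := hv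
      have h1v : (1 : ZMod p) + v ≠ 0 := fun h => hv1 (by linear_combination h)
      refine ⟨mul_ne_zero h0 (inv_ne_zero h1v), ?_⟩
      intro hc
      field_simp at hc
      exact one_ne_zero (α := ZMod p) (by linear_combination -hc)
    · intro u hu
      simp only [Finset.mem_erase, Finset.mem_univ, and_true] at hu
      obtain ⟨h0, h1'⟩ := hu
      have h1u : (1 : ZMod p) - u ≠ 0 := sub_ne_zero.2 fun h => h1' h.symm
      have key : 1 + u * (1 - u)⁻¹ = (1 - u)⁻¹ := by field_simp; ring
      rw [key, inv_inv]
      field_simp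
    · intro v hv
      simp only [Finset.mem_erase, Finset.mem_univ, and_true] at hv
      obtain ⟨h0, hv1⟩ := hv
      have h1v : (1 : ZMod p) + v ≠ 0 := fun h => hv1 (by linear_combination h)
      have key : 1 - v * (1 + v)⁻¹ = (1 + v)⁻¹ := by field_simp; ring
      rw [key, inv_inv]
      field_simp
    · intro u hu; rfl
  have h01 : (0 : ZMod p) ≠ -1 := fun hc => one_ne_zero (α := ZMod p) (by linear_combination hc)
  have hmem0 : (0 : ZMod p) ∈ Finset.univ.erase (-1 : ZMod p) := by
    simp [h01]
  calc ∑ x ∈ (Finset.univ.erase (1 : ZMod p)).erase 0, f x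
      = ∑ u ∈ (Finset.univ.erase (1 : ZMod p)).erase 0, chi4 p w (u * (1 - u)⁻¹) :=
        Finset.sum_congr rfl hstep
    _ = ∑ v ∈ (Finset.univ.erase (-1 : ZMod p)).erase 0, chi4 p w v := hbij
    _ = 1 := by
        rw [Finset.sum_erase_eq_sub hmem0,
          Finset.sum_erase_eq_sub (Finset.mem_univ (-1 : ZMod p))]
        rw [sum_chi4_zero hp5 hw, chi4_zero hp5 hw, chi4_neg_one hp5 hw]
        ring

lemma conv_chi4 (s : ZMod p) :
    ∑ t : ZMod p, chi4 p w t * star (chi4 p w (s - t))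
      = ((if s = 0 then 1 - (p : ℤ) else 1 : ℤ) : GaussianInt) := by
  by_cases hs : s = 0
  · subst hs
    rw [if_pos rfl]
    calc ∑ t : ZMod p, chi4 p w t * star (chi4 p w (0 - t))
        = ∑ t : ZMod p, -(chi4 p w t * star (chi4 p w t)) := by
          apply Finset.sum_congr rfl
          intro t _
          have e : (0 : ZMod p) - t = -1 * t := by ring
          rw [e, chi4_mul hp5 hw, chi4_neg_one hp5 hw, star_mul', star_neg, star_one]
          ring
      _ = -∑ t : ZMod p, chi4 p w t * star (chi4 p w t) := by
          rw [Finset.sum_neg_distrib]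
      _ = ((1 - (p : ℤ) : ℤ) : GaussianInt) := by
          rw [sum_chi4_norm hp5 hw]; push_cast; ring
  · rw [if_neg hs]
    have h := Equiv.sum_comp (Equiv.mulLeft₀ s hs)
      (fun t => chi4 p w t * star (chi4 p w (s - t)))
    simp only [Equiv.mulLeft₀_apply] at h
    rw [← h]
    calc ∑ u : ZMod p, chi4 p w (s * u) * star (chi4 p w (s - s * u))
        = ∑ u : ZMod p, (chi4 p w s * star (chi4 p w s))
            * (chi4 p w u * star (chi4 p w (1 - u))) := by
          apply Finset.sum_congr rfl
          intro u _
          have e : s - s * u = s * (1 - u) := by ring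
          rw [e, chi4_mul hp5 hw, chi4_mul hp5 hw, star_mul']
          ring
      _ = ∑ u : ZMod p, chi4 p w u * star (chi4 p w (1 - u)) := by
          apply Finset.sum_congr rfl
          intro u _
          rw [chi4_star_mul hp5 hw hs, one_mul]
      _ = 1 := jacobi hp5 hw
      _ = ((1 : ℤ) : GaussianInt) := by push_cast; ring

lemma pointwise (t u : ZMod p) :
    chi4 p w t * star (chi4 p w u) + star (chi4 p w t) * chi4 p w u
      = 2 * ((psi p t * psi p u + psi p (2 * t) * psi p (2 * u) : ℤ) : GaussianInt) := by
  have h2K : (2 : GaussianInt) ≠ 0 := by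
    intro h
    have := congrArg Zsqrtd.re h
    simp at this
  have hc2sq : chi4 p w 2 * chi4 p w 2 = -1 := by
    rcases eta_two hp5 hw with h | h
    · rw [chi4_eval_w hp5 hw h, sqd]
    · rw [chi4_eval_neg_w hp5 hw h, neg_mul_neg, sqd]
  have hc2sq' : star (chi4 p w 2) * star (chi4 p w 2) = -1 := by
    rw [← star_mul', hc2sq]
    simp
  have hc2norm : chi4 p w 2 * star (chi4 p w 2) = 1 :=
    chi4_star_mul hp5 hw (two_ne_zero' hp5)
  have e1 := chi4_add_star hp5 hw t
  have e2 := chi4_add_star hp5 hw u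
  have e3 := chi4_add_star hp5 hw (2 * t)
  have e4 := chi4_add_star hp5 hw (2 * u)
  rw [chi4_mul hp5 hw, star_mul'] at e3 e4
  apply mul_left_cancel₀ h2K
  push_cast at e1 e2 e3 e4 ⊢
  linear_combination (chi4 p w u + star (chi4 p w u)) * e1
    + 2 * ((psi p t : ℤ) : GaussianInt) * e2
    + (chi4 p w 2 * chi4 p w u + star (chi4 p w 2) * star (chi4 p w u)) * e3
    + 2 * ((psi p (2 * t) : ℤ) : GaussianInt) * e4
    - chi4 p w t * chi4 p w u * hc2sq
    - star (chi4 p w t) * star (chi4 p w u) * hc2sq'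
    - (chi4 p w t * star (chi4 p w u) + star (chi4 p w t) * chi4 p w u) * hc2norm

end five

section keysum

variable (hp5 : p % 8 = 5)
include hp5

lemma key_sum (s : ZMod p) :
    ∑ t : ZMod p, (psi p t * psi p (s - t) + psi p (2 * t) * psi p (2 * (s - t)))
      = if s = 0 then 1 - (p : ℤ) else 1 := by
  obtain ⟨w, hw⟩ : ∃ w : ZMod p, w * w = -1 := by
    have h := (ZMod.exists_sq_eq_neg_one_iff (p := p)).2 (by omega)
    obtain ⟨r, hr⟩ := h
    exact ⟨r, hr.symm⟩
  have h2K : (2 : GaussianInt) ≠ 0 := by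
    intro h
    have := congrArg Zsqrtd.re h
    simp at this
  apply Int.cast_injective (α := GaussianInt)
  apply mul_left_cancel₀ h2K
  have hC := conv_chi4 hp5 hw s
  have hCstar : ∑ t : ZMod p, star (chi4 p w t) * chi4 p w (s - t)
      = ((if s = 0 then 1 - (p : ℤ) else 1 : ℤ) : GaussianInt) := by
    have h := congrArg star hC
    rw [star_sum] at h
    calc ∑ t : ZMod p, star (chi4 p w t) * chi4 p w (s - t)
        = ∑ t : ZMod p, star (chi4 p w t * star (chi4 p w (s - t))) := by
          apply Finset.sum_congr rfl
          intro t _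
          rw [star_mul', star_star]
      _ = star (((if s = 0 then 1 - (p : ℤ) else 1 : ℤ) : GaussianInt)) := h
      _ = _ := by rw [star_intCast]
  calc (2 : GaussianInt) * ((∑ t : ZMod p,
          (psi p t * psi p (s - t) + psi p (2 * t) * psi p (2 * (s - t))) : ℤ) : GaussianInt)
      = ∑ t : ZMod p, 2 * ((psi p t * psi p (s - t)
          + psi p (2 * t) * psi p (2 * (s - t)) : ℤ) : GaussianInt) := by
        push_cast
        rw [Finset.mul_sum]
    _ = ∑ t : ZMod p, (chi4 p w t * star (chi4 p w (s - t))
          + star (chi4 p w t) * chi4 p w (s - t)) := by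
        apply Finset.sum_congr rfl
        intro t _
        rw [pointwise hp5 hw]
    _ = ((if s = 0 then 1 - (p : ℤ) else 1 : ℤ) : GaussianInt)
          + ((if s = 0 then 1 - (p : ℤ) else 1 : ℤ) : GaussianInt) := by
        rw [Finset.sum_add_distrib, hC, hCstar]
    _ = 2 * ((if s = 0 then 1 - (p : ℤ) else 1 : ℤ) : GaussianInt) := by ring

end keysum


-- ## Matrix layer

section mat

open Matrix

variable (hp5 : p % 8 = 5)
include hp5

lemma RX_eq (a b : ZMod p) : RX p a b = psi p (b - a) := by
  have h := psi_spec hp5 (p := p) (b - a)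
  simpa [RX] using h

lemma RY_eq (a b : ZMod p) : RY p a b = psi p (2 * (b - a)) := by
  have h := psi_spec hp5 (p := p) (2 * (b - a))
  simpa [RY] using h

lemma psi_eval_one {x : ZMod p} (h : x ^ (p / 4) = 1) : psi p x = 1 := by
  rw [psi, if_pos h]

lemma psi_eval_neg_one {x : ZMod p} (h : x ^ (p / 4) = -1) : psi p x = -1 := by
  rw [psi, if_neg (by rw [h]; exact fun hc => one_ne_negone hp5 hc.symm), if_pos h]

omit hp5 in
lemma psi_eval_other {x : ZMod p} (h1 : x ^ (p / 4) ≠ 1) (h2 : x ^ (p / 4) ≠ -1) :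
    psi p x = 0 := by
  rw [psi, if_neg h1, if_neg h2]

lemma psi_pair {x : ZMod p} (hx : x ≠ 0) :
    (psi p x = 0 ∧ (psi p (2 * x) = 1 ∨ psi p (2 * x) = -1)) ∨
      ((psi p x = 1 ∨ psi p x = -1) ∧ psi p (2 * x) = 0) := by
  obtain ⟨w, hw⟩ : ∃ w : ZMod p, w * w = -1 := by
    obtain ⟨r, hr⟩ := (ZMod.exists_sq_eq_neg_one_iff (p := p)).2 (by omega)
    exact ⟨r, hr.symm⟩
  obtain ⟨hw1, hw2, hw3, hw4, hw5, hw0⟩ := w_facts hp5 hw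
  have hmul : (2 * x) ^ (p / 4) = 2 ^ (p / 4) * x ^ (p / 4) := mul_pow _ _ _
  rcases eta_cases hp5 hw hx with h | h | h | h <;> rcases eta_two hp5 hw with h2 | h2
  · exact Or.inr ⟨Or.inl (psi_eval_one hp5 h),
      psi_eval_other (by rw [hmul, h, h2, mul_one]; exact hw1)
        (by rw [hmul, h, h2, mul_one]; exact hw2)⟩
  · exact Or.inr ⟨Or.inl (psi_eval_one hp5 h),
      psi_eval_other (by rw [hmul, h, h2, mul_one]; exact hw3)
        (by rw [hmul, h, h2, mul_one]; exact hw4)⟩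
  · exact Or.inr ⟨Or.inr (psi_eval_neg_one hp5 h),
      psi_eval_other (by rw [hmul, h, h2]; intro hc; exact hw3 (by linear_combination hc))
        (by rw [hmul, h, h2]; intro hc; exact hw4 (by linear_combination hc))⟩
  · exact Or.inr ⟨Or.inr (psi_eval_neg_one hp5 h),
      psi_eval_other (by rw [hmul, h, h2]; intro hc; exact hw1 (by linear_combination hc))
        (by rw [hmul, h, h2]; intro hc; exact hw2 (by linear_combination hc))⟩
  · exact Or.inl ⟨psi_eval_other (by rw [h]; exact hw1) (by rw [h]; exact hw2),
      Or.inr (psi_eval_neg_one hp5 (by rw [hmul, h, h2]; linear_combination hw))⟩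
  · exact Or.inl ⟨psi_eval_other (by rw [h]; exact hw1) (by rw [h]; exact hw2),
      Or.inl (psi_eval_one hp5 (by rw [hmul, h, h2]; linear_combination -hw))⟩
  · exact Or.inl ⟨psi_eval_other (by rw [h]; exact hw3) (by rw [h]; exact hw4),
      Or.inl (psi_eval_one hp5 (by rw [hmul, h, h2]; linear_combination -hw))⟩
  · exact Or.inl ⟨psi_eval_other (by rw [h]; exact hw3) (by rw [h]; exact hw4),
      Or.inr (psi_eval_neg_one hp5 (by rw [hmul, h, h2]; linear_combination hw))⟩

lemma s1 {x : ZMod p} (hx : x ≠ 0) :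
    psi p x + psi p (2 * x) = 1 ∨ psi p x + psi p (2 * x) = -1 := by
  rcases psi_pair hp5 hx with ⟨h0, h | h⟩ | ⟨h | h, h0⟩ <;> rw [h0, h] <;> norm_num

lemma s2 {x : ZMod p} (hx : x ≠ 0) :
    psi p (2 * x) - psi p x = 1 ∨ psi p (2 * x) - psi p x = -1 := by
  rcases psi_pair hp5 hx with ⟨h0, h | h⟩ | ⟨h | h, h0⟩ <;> rw [h0, h] <;> norm_num

-- sums

lemma psi2_sum_zero : ∑ t : ZMod p, psi p (2 * t) = 0 := by
  have h := Equiv.sum_comp (Equiv.mulLeft₀ (2 : ZMod p) (two_ne_zero' hp5)) (psi p)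
  simp only [Equiv.mulLeft₀_apply] at h
  exact h.trans (psi_sum_zero hp5)

lemma sum_psi_sub_right (b : ZMod p) : ∑ c : ZMod p, psi p (b - c) = 0 := by
  have h := Equiv.sum_comp (Equiv.subLeft b) (psi p)
  simp only [Equiv.subLeft_apply] at h
  exact h.trans (psi_sum_zero hp5)

lemma sum_psi_sub_left (b : ZMod p) : ∑ c : ZMod p, psi p (c - b) = 0 := by
  have h := Equiv.sum_comp (Equiv.addRight b) (fun c => psi p (c - b))
  simp only [Equiv.coe_addRight, add_sub_cancel_right] at h
  exact h.symm.trans (psi_sum_zero hp5)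

lemma sum_psi2_sub_right (b : ZMod p) : ∑ c : ZMod p, psi p (2 * (b - c)) = 0 := by
  have h := Equiv.sum_comp (Equiv.subLeft b) (fun t => psi p (2 * t))
  simp only [Equiv.subLeft_apply] at h
  exact h.trans (psi2_sum_zero hp5)

lemma sum_psi2_sub_left (b : ZMod p) : ∑ c : ZMod p, psi p (2 * (c - b)) = 0 := by
  have h := Equiv.sum_comp (Equiv.addRight b) (fun c => psi p (2 * (c - b)))
  simp only [Equiv.coe_addRight, add_sub_cancel_right] at h
  exact h.symm.trans (psi2_sum_zero hp5)

lemma conv_comm (a b : ZMod p) :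
    ∑ c : ZMod p, psi p (c - a) * psi p (2 * (b - c))
      = ∑ c : ZMod p, psi p (2 * (c - a)) * psi p (b - c) := by
  have h := Equiv.sum_comp (Equiv.subLeft (a + b))
    (fun c => psi p (c - a) * psi p (2 * (b - c)))
  simp only [Equiv.subLeft_apply] at h
  rw [← h]
  apply Finset.sum_congr rfl
  intro c _
  have e1 : a + b - c - a = b - c := by ring
  have e2 : b - (a + b - c) = c - a := by ring
  rw [e1, e2]
  ring

lemma RR_sum (a b : ZMod p) :
    ∑ c : ZMod p, (psi p (c - a) * psi p (b - c)
        + psi p (2 * (c - a)) * psi p (2 * (b - c)))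
      = if a = b then 1 - (p : ℤ) else 1 := by
  have h := Equiv.sum_comp (Equiv.addRight a)
    (fun c => psi p (c - a) * psi p (b - c)
      + psi p (2 * (c - a)) * psi p (2 * (b - c)))
  simp only [Equiv.coe_addRight, add_sub_cancel_right] at h
  rw [← h]
  have h2 : ∀ t : ZMod p, b - (t + a) = b - a - t := fun t => by ring
  calc ∑ t : ZMod p, (psi p t * psi p (b - (t + a))
          + psi p (2 * t) * psi p (2 * (b - (t + a))))
      = ∑ t : ZMod p, (psi p t * psi p (b - a - t)
          + psi p (2 * t) * psi p (2 * (b - a - t))) := by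
        apply Finset.sum_congr rfl; intro t _; rw [h2]
    _ = if b - a = 0 then 1 - (p : ℤ) else 1 := key_sum hp5 (b - a)
    _ = if a = b then 1 - (p : ℤ) else 1 := by
        by_cases hab : a = b
        · rw [if_pos hab, if_pos (by rw [hab, sub_self])]
        · rw [if_neg hab, if_neg (fun hc => hab (by linear_combination -hc))]

-- matrix identities on the Option level

lemma XT : (Xmat p)ᵀ = -(Xmat p) := by
  ext i j
  cases i <;> cases j <;>
    simp only [Matrix.transpose_apply, Matrix.neg_apply, Xmat, Matrix.of_apply] <;>
    try norm_num
  rename_i b a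
  rw [RX_eq hp5, RX_eq hp5]
  have h := psi_neg hp5 (b - a)
  have e : -(b - a) = a - b := by ring
  rw [e] at h
  rw [h]
  ring

lemma YT : (Ymat p)ᵀ = -(Ymat p) := by
  ext i j
  cases i <;> cases j <;>
    simp only [Matrix.transpose_apply, Matrix.neg_apply, Ymat, Matrix.of_apply] <;>
    try norm_num
  rename_i b a
  rw [RY_eq hp5, RY_eq hp5]
  have h := psi_neg hp5 (2 * (b - a))
  have e : -(2 * (b - a)) = 2 * (a - b) := by ring
  rw [e] at h
  rw [h]
  ring

lemma XY_comm : Xmat p * Ymat p = Ymat p * Xmat p := by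
  ext i j
  rw [Matrix.mul_apply, Matrix.mul_apply, Fintype.sum_option, Fintype.sum_option]
  cases i <;> cases j <;>
    simp only [Xmat, Ymat, Matrix.of_apply, zero_mul, mul_zero, zero_add, add_zero,
      one_mul, mul_one, neg_mul, mul_neg]
  · rfl
  · rename_i b
    rw [Finset.sum_congr rfl (fun c _ => RY_eq hp5 c b), sum_psi2_sub_right hp5 b]
    simp
  · rename_i a
    rw [Finset.sum_congr rfl (fun c _ => congrArg Neg.neg (RY_eq hp5 a c)),
      Finset.sum_neg_distrib, sum_psi2_sub_left hp5 a]
    simp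
  · rename_i a b
    calc ∑ c : ZMod p, RX p a c * RY p c b
        = ∑ c : ZMod p, psi p (c - a) * psi p (2 * (b - c)) := by
          apply Finset.sum_congr rfl; intro c _; rw [RX_eq hp5, RY_eq hp5]
      _ = ∑ c : ZMod p, psi p (2 * (c - a)) * psi p (b - c) := conv_comm hp5 a b
      _ = ∑ c : ZMod p, RY p a c * RX p c b := by
          apply Finset.sum_congr rfl; intro c _; rw [RX_eq hp5, RY_eq hp5]

lemma XXYY : Xmat p * Xmat p + Ymat p * Ymat p
    = (-(p : ℤ)) • (1 : Matrix (Option (ZMod p)) (Option (ZMod p)) ℤ) := by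
  ext i j
  rw [Matrix.add_apply, Matrix.mul_apply, Matrix.mul_apply, Fintype.sum_option,
    Fintype.sum_option]
  cases i <;> cases j <;>
    simp only [Xmat, Ymat, Matrix.of_apply, zero_mul, mul_zero, zero_add, add_zero,
      one_mul, mul_one, neg_mul, mul_neg]
  · simp [Matrix.smul_apply, Matrix.one_apply, Finset.sum_const, ZMod.card]
  · rename_i b
    rw [Finset.sum_congr rfl (fun c _ => RX_eq hp5 c b), sum_psi_sub_right hp5 b]
    simp [Matrix.smul_apply, Matrix.one_apply]
  · rename_i a
    rw [Finset.sum_congr rfl (fun c _ => congrArg Neg.neg (RX_eq hp5 a c)),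
      Finset.sum_neg_distrib, sum_psi_sub_left hp5 a]
    simp [Matrix.smul_apply, Matrix.one_apply]
  · rename_i a b
    have key := RR_sum hp5 a b
    have e1 : ∑ c : ZMod p, RX p a c * RX p c b
        = ∑ c : ZMod p, psi p (c - a) * psi p (b - c) := by
      apply Finset.sum_congr rfl; intro c _; rw [RX_eq hp5, RX_eq hp5]
    have e2 : ∑ c : ZMod p, RY p a c * RY p c b
        = ∑ c : ZMod p, psi p (2 * (c - a)) * psi p (2 * (b - c)) := by
      apply Finset.sum_congr rfl; intro c _; rw [RY_eq hp5, RY_eq hp5]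
    rw [Finset.sum_add_distrib] at key
    rw [Matrix.smul_apply, smul_eq_mul, e1, e2]
    by_cases hab : a = b
    · subst hab
      rw [Matrix.one_apply_eq]
      rw [if_pos rfl] at key
      linarith [key]
    · rw [Matrix.one_apply_ne (fun hc => hab (Option.some_inj.mp hc))]
      rw [if_neg hab] at key
      linarith [key]

end mat

-- ## Hadamard layer

section had

open Matrix

omit [Fact p.Prime] in
lemma had_blocks {R : Type*} [CommRing R] {n : Type*} [Fintype n] [DecidableEq n]
    {A B E : Matrix n n R}
    (hE2 : E * E = 1) (hEA : E * A = A * E) (hEB : E * B = B * E)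
    (hcomm : A * B = B * A) :
    ((A + E) * (-A + E) + (B + E) * (-B + E) = 1 + 1 - (A * A + B * B))
    ∧ ((A + E) * (-B - E) + (B + E) * (A + E) = 0)
    ∧ ((B - E) * (-A + E) + (-A + E) * (-B + E) = 0)
    ∧ ((B - E) * (-B - E) + (-A + E) * (A + E) = 1 + 1 - (A * A + B * B)) := by
  refine ⟨?_, ?_, ?_, ?_⟩
  · have expand : (A + E) * (-A + E) + (B + E) * (-B + E)
        = E * E + E * E - A * A - B * B + (A * E - E * A) + (B * E - E * B) := by
      noncomm_ring
    rw [expand, hEA, hEB, hE2]; abel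
  · have expand : (A + E) * (-B - E) + (B + E) * (A + E)
        = (B * A - A * B) + (B * E - E * B) + (E * A - A * E) := by
      noncomm_ring
    rw [expand, hcomm, hEA, hEB]; abel
  · have expand : (B - E) * (-A + E) + (-A + E) * (-B + E)
        = (A * B - B * A) + (B * E - E * B) + (E * A - A * E) := by
      noncomm_ring
    rw [expand, hcomm, hEA, hEB]; abel
  · have expand : (B - E) * (-B - E) + (-A + E) * (A + E)
        = E * E + E * E - A * A - B * B + (E * B - B * E) + (E * A - A * E) := by
      noncomm_ring
    rw [expand, hEA, hEB, hE2]; abel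

variable (hp5 : p % 8 = 5)
include hp5

lemma Hnv_blocks (t : ℤ) :
    Hnv p t = Matrix.fromBlocks
      ((Xmat p + Ymat p) + t • 1) ((Ymat p - Xmat p) + t • 1)
      ((Ymat p - Xmat p) - t • 1) (-(Xmat p + Ymat p) + t • 1) := by
  have h11 : Xmat p - (Ymat p)ᵀ + t • (1 : Matrix (Option (ZMod p)) (Option (ZMod p)) ℤ)
      = (Xmat p + Ymat p) + t • 1 := by rw [YT hp5]; abel
  have h12 : Ymat p + (Xmat p)ᵀ + t • (1 : Matrix (Option (ZMod p)) (Option (ZMod p)) ℤ)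
      = (Ymat p - Xmat p) + t • 1 := by rw [XT hp5]; abel
  have h21 : -(Ymat p)ᵀ - Xmat p - t • (1 : Matrix (Option (ZMod p)) (Option (ZMod p)) ℤ)
      = (Ymat p - Xmat p) - t • 1 := by rw [YT hp5]; abel
  have h22 : (Xmat p)ᵀ - Ymat p + t • (1 : Matrix (Option (ZMod p)) (Option (ZMod p)) ℤ)
      = -(Xmat p + Ymat p) + t • 1 := by rw [XT hp5]; abel
  rw [Hnv, h11, h12, h21, h22]

lemma Hnv_mul (t : ℤ) (ht : t = 1 ∨ t = -1) :
    Hnv p t * (Hnv p t)ᵀ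
      = ((2 * (p + 1) : ℕ) : ℤ) • (1 : Matrix (NVIdx p) (NVIdx p) ℤ) := by
  have htt : t * t = 1 := by rcases ht with h | h <;> rw [h] <;> norm_num
  set A : Matrix (Option (ZMod p)) (Option (ZMod p)) ℤ := Xmat p + Ymat p with hA
  set B : Matrix (Option (ZMod p)) (Option (ZMod p)) ℤ := Ymat p - Xmat p with hB
  set E : Matrix (Option (ZMod p)) (Option (ZMod p)) ℤ := t • 1 with hE
  have hAT : Aᵀ = -A := by
    rw [hA, Matrix.transpose_add, XT hp5, YT hp5]; abel
  have hBT : Bᵀ = -B := by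
    rw [hB, Matrix.transpose_sub, XT hp5, YT hp5]; abel
  have hET : Eᵀ = E := by rw [hE, Matrix.transpose_smul, Matrix.transpose_one]
  have hE2 : E * E = 1 := by
    rw [hE, smul_mul_assoc, one_mul, smul_smul, htt, one_smul]
  have hEA : E * A = A * E := by
    rw [hE, smul_mul_assoc, one_mul, mul_smul_comm, mul_one]
  have hEB : E * B = B * E := by
    rw [hE, smul_mul_assoc, one_mul, mul_smul_comm, mul_one]
  have hcomm : A * B = B * A := by
    have e1 : A * B = Xmat p * Ymat p - Ymat p * Xmat p
        + (Ymat p * Ymat p - Xmat p * Xmat p) := by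
      rw [hA, hB]
      simp only [add_mul, mul_sub]
      abel
    have e2 : B * A = Ymat p * Xmat p - Xmat p * Ymat p
        + (Ymat p * Ymat p - Xmat p * Xmat p) := by
      rw [hA, hB]
      simp only [sub_mul, mul_add]
      abel
    rw [e1, e2, XY_comm hp5]
  have hsq : A * A + B * B
      = (-(p : ℤ)) • (1 : Matrix (Option (ZMod p)) (Option (ZMod p)) ℤ)
        + (-(p : ℤ)) • 1 := by
    have expand : A * A + B * B
        = (Xmat p * Xmat p + Ymat p * Ymat p) + (Xmat p * Xmat p + Ymat p * Ymat p) := by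
      rw [hA, hB]
      simp only [add_mul, mul_add, sub_mul, mul_sub]
      abel
    rw [expand, XXYY hp5]
  obtain ⟨b11, b12, b21, b22⟩ := had_blocks hE2 hEA hEB hcomm
  have hval : (1 : Matrix (Option (ZMod p)) (Option (ZMod p)) ℤ) + 1 - (A * A + B * B)
      = ((2 * (p + 1) : ℕ) : ℤ) • 1 := by
    rw [hsq]
    have e : ((2 * (p + 1) : ℕ) : ℤ) = (1 : ℤ) + 1 - (-(p : ℤ) + -(p : ℤ)) := by
      push_cast; ring
    rw [e, sub_smul, add_smul, add_smul, one_smul]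
  have T1 : (A + E)ᵀ = -A + E := by rw [Matrix.transpose_add, hAT, hET]
  have T2 : (B + E)ᵀ = -B + E := by rw [Matrix.transpose_add, hBT, hET]
  have T3 : (B - E)ᵀ = -B - E := by rw [Matrix.transpose_sub, hBT, hET]
  have T4 : (-A + E)ᵀ = A + E := by
    rw [Matrix.transpose_add, Matrix.transpose_neg, hAT, hET, neg_neg]
  conv_rhs => rw [← Matrix.fromBlocks_one (l := Option (ZMod p)) (m := Option (ZMod p))
    (α := ℤ), Matrix.fromBlocks_smul]
  simp only [smul_zero]
  rw [Hnv_blocks hp5 t, Matrix.fromBlocks_transpose, T1, T2, T3, T4,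
    Matrix.fromBlocks_multiply, b11, b12, b21, b22, hval]

end had

section entries

open Matrix

variable (hp5 : p % 8 = 5)
include hp5

lemma RX_diag (a : ZMod p) : RX p a a = 0 := by
  rw [RX_eq hp5, sub_self, psi_zero hp5]

lemma RY_diag (a : ZMod p) : RY p a a = 0 := by
  rw [RY_eq hp5, sub_self, mul_zero, psi_zero hp5]

lemma off1 {a b : ZMod p} (hab : a ≠ b) :
    RX p a b - RY p b a = 1 ∨ RX p a b - RY p b a = -1 := by
  have hx : b - a ≠ 0 := sub_ne_zero.2 (fun h => hab h.symm)
  have e : 2 * (a - b) = -(2 * (b - a)) := by ring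
  rw [RX_eq hp5, RY_eq hp5, e, psi_neg hp5]
  rcases s1 hp5 hx with h | h
  · left; linarith
  · right; linarith

lemma off2 {a b : ZMod p} (hab : a ≠ b) :
    RY p a b + RX p b a = 1 ∨ RY p a b + RX p b a = -1 := by
  have hx : b - a ≠ 0 := sub_ne_zero.2 (fun h => hab h.symm)
  have e : a - b = -(b - a) := by ring
  rw [RX_eq hp5, RY_eq hp5, e, psi_neg hp5]
  rcases s2 hp5 hx with h | h
  · left; linarith
  · right; linarith

lemma off3 {a b : ZMod p} (hab : a ≠ b) :
    -RY p b a - RX p a b = 1 ∨ -RY p b a - RX p a b = -1 := by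
  have hx : b - a ≠ 0 := sub_ne_zero.2 (fun h => hab h.symm)
  have e : 2 * (a - b) = -(2 * (b - a)) := by ring
  rw [RX_eq hp5, RY_eq hp5, e, psi_neg hp5]
  rcases s2 hp5 hx with h | h
  · left; linarith
  · right; linarith

lemma off4 {a b : ZMod p} (hab : a ≠ b) :
    RX p b a - RY p a b = 1 ∨ RX p b a - RY p a b = -1 := by
  have hx : b - a ≠ 0 := sub_ne_zero.2 (fun h => hab h.symm)
  have e : a - b = -(b - a) := by ring
  rw [RX_eq hp5, RY_eq hp5, e, psi_neg hp5]
  rcases s1 hp5 hx with h | h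
  · right; linarith
  · left; linarith

omit hp5 in
lemma entry_pm {N : Matrix (Option (ZMod p)) (Option (ZMod p)) ℤ}
    (hdiag : ∀ u, N u u = 0)
    (hoff : ∀ u v, u ≠ v → N u v = 1 ∨ N u v = -1)
    {e : ℤ} (he : e = 1 ∨ e = -1) (u v : Option (ZMod p)) :
    N u v + e * (if u = v then (1 : ℤ) else 0) = 1 ∨
      N u v + e * (if u = v then (1 : ℤ) else 0) = -1 := by
  by_cases h : u = v
  · subst h
    rw [hdiag, if_pos rfl, mul_one, zero_add]
    exact he
  · rw [if_neg h, mul_zero, add_zero]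
    exact hoff u v h

lemma N1_diag (u : Option (ZMod p)) : (Xmat p - (Ymat p)ᵀ) u u = 0 := by
  rcases u with _ | a
  · simp [Xmat, Ymat]
  · simp [Xmat, Ymat, RX_diag hp5, RY_diag hp5]

lemma N1_off (u v : Option (ZMod p)) (huv : u ≠ v) :
    (Xmat p - (Ymat p)ᵀ) u v = 1 ∨ (Xmat p - (Ymat p)ᵀ) u v = -1 := by
  rcases u with _ | a <;> rcases v with _ | b
  · exact absurd rfl huv
  · left; simp [Xmat, Ymat]
  · right; simp [Xmat, Ymat]
  · have hab : a ≠ b := fun h => huv (by rw [h])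
    simpa [Xmat, Ymat] using off1 hp5 hab

lemma N2_diag (u : Option (ZMod p)) : (Ymat p + (Xmat p)ᵀ) u u = 0 := by
  rcases u with _ | a
  · simp [Xmat, Ymat]
  · simp [Xmat, Ymat, RX_diag hp5, RY_diag hp5]

lemma N2_off (u v : Option (ZMod p)) (huv : u ≠ v) :
    (Ymat p + (Xmat p)ᵀ) u v = 1 ∨ (Ymat p + (Xmat p)ᵀ) u v = -1 := by
  rcases u with _ | a <;> rcases v with _ | b
  · exact absurd rfl huv
  · right; simp [Xmat, Ymat]
  · left; simp [Xmat, Ymat]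
  · have hab : a ≠ b := fun h => huv (by rw [h])
    simpa [Xmat, Ymat] using off2 hp5 hab

lemma N3_diag (u : Option (ZMod p)) : (-(Ymat p)ᵀ - Xmat p) u u = 0 := by
  rcases u with _ | a
  · simp [Xmat, Ymat]
  · simp [Xmat, Ymat, RX_diag hp5, RY_diag hp5]

lemma N3_off (u v : Option (ZMod p)) (huv : u ≠ v) :
    (-(Ymat p)ᵀ - Xmat p) u v = 1 ∨ (-(Ymat p)ᵀ - Xmat p) u v = -1 := by
  rcases u with _ | a <;> rcases v with _ | b
  · exact absurd rfl huv
  · right; simp [Xmat, Ymat]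
  · left; simp [Xmat, Ymat]
  · have hab : a ≠ b := fun h => huv (by rw [h])
    simpa [Xmat, Ymat] using off3 hp5 hab

lemma N4_diag (u : Option (ZMod p)) : ((Xmat p)ᵀ - Ymat p) u u = 0 := by
  rcases u with _ | a
  · simp [Xmat, Ymat]
  · simp [Xmat, Ymat, RX_diag hp5, RY_diag hp5]

lemma N4_off (u v : Option (ZMod p)) (huv : u ≠ v) :
    ((Xmat p)ᵀ - Ymat p) u v = 1 ∨ ((Xmat p)ᵀ - Ymat p) u v = -1 := by
  rcases u with _ | a <;> rcases v with _ | b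
  · exact absurd rfl huv
  · right; simp [Xmat, Ymat]
  · left; simp [Xmat, Ymat]
  · have hab : a ≠ b := fun h => huv (by rw [h])
    simpa [Xmat, Ymat] using off4 hp5 hab

lemma Hnv_entries (t : ℤ) (ht : t = 1 ∨ t = -1) (i j : NVIdx p) :
    Hnv p t i j = 1 ∨ Hnv p t i j = -1 := by
  have hnt : -t = 1 ∨ -t = -1 := by
    rcases ht with h | h
    · right; rw [h]
    · left; rw [h]; norm_num
  rcases i with i | i <;> rcases j with j | j
  · rw [Hnv, Matrix.fromBlocks_apply₁₁]
    have e : (Xmat p - (Ymat p)ᵀ + t • 1) i j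
        = (Xmat p - (Ymat p)ᵀ) i j + t * (if i = j then (1 : ℤ) else 0) := by
      rw [Matrix.add_apply, Matrix.smul_apply, Matrix.one_apply, smul_eq_mul]
    rw [e]
    exact entry_pm (N1_diag hp5) (N1_off hp5) ht i j
  · rw [Hnv, Matrix.fromBlocks_apply₁₂]
    have e : (Ymat p + (Xmat p)ᵀ + t • 1) i j
        = (Ymat p + (Xmat p)ᵀ) i j + t * (if i = j then (1 : ℤ) else 0) := by
      rw [Matrix.add_apply, Matrix.smul_apply, Matrix.one_apply, smul_eq_mul]
    rw [e]
    exact entry_pm (N2_diag hp5) (N2_off hp5) ht i j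
  · rw [Hnv, Matrix.fromBlocks_apply₂₁]
    have e : (-(Ymat p)ᵀ - Xmat p - t • 1) i j
        = (-(Ymat p)ᵀ - Xmat p) i j + (-t) * (if i = j then (1 : ℤ) else 0) := by
      rw [Matrix.sub_apply, Matrix.smul_apply, Matrix.one_apply, smul_eq_mul]
      ring
    rw [e]
    exact entry_pm (N3_diag hp5) (N3_off hp5) hnt i j
  · rw [Hnv, Matrix.fromBlocks_apply₂₂]
    have e : ((Xmat p)ᵀ - Ymat p + t • 1) i j
        = ((Xmat p)ᵀ - Ymat p) i j + t * (if i = j then (1 : ℤ) else 0) := by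
      rw [Matrix.add_apply, Matrix.smul_apply, Matrix.one_apply, smul_eq_mul]
    rw [e]
    exact entry_pm (N4_diag hp5) (N4_off hp5) ht i j

end entries


section rows

open Matrix

lemma Hnv_row_inl (t : ℤ) (j : Option (ZMod p)) (k : NVIdx p) :
    Hnv p t (Sum.inl j) k = NVgen p t (Sum.inl j) k + NVgen p t (Sum.inr j) k := by
  rcases k with k | k <;>
    simp only [Hnv, NVgen, Bw, Matrix.fromBlocks_apply₁₁, Matrix.fromBlocks_apply₁₂,
      Matrix.fromBlocks_apply₂₁, Matrix.fromBlocks_apply₂₂, Matrix.add_apply,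
      Matrix.sub_apply, Matrix.neg_apply, Matrix.smul_apply, Matrix.one_apply,
      smul_eq_mul, Matrix.transpose_apply, Sum.inl.injEq, Sum.inr.injEq,
      reduceCtorEq, if_false] <;>
    split_ifs <;> ring

lemma Hnv_row_inr (t : ℤ) (j : Option (ZMod p)) (k : NVIdx p) :
    Hnv p t (Sum.inr j) k = NVgen p t (Sum.inr j) k - NVgen p t (Sum.inl j) k := by
  rcases k with k | k <;>
    simp only [Hnv, NVgen, Bw, Matrix.fromBlocks_apply₁₁, Matrix.fromBlocks_apply₁₂,
      Matrix.fromBlocks_apply₂₁, Matrix.fromBlocks_apply₂₂, Matrix.add_apply,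
      Matrix.sub_apply, Matrix.neg_apply, Matrix.smul_apply, Matrix.one_apply,
      smul_eq_mul, Matrix.transpose_apply, Sum.inl.injEq, Sum.inr.injEq,
      reduceCtorEq, if_false] <;>
    split_ifs <;> ring

end rows

end NVAux

/-- for a prime `p ≡ 5 (mod 24)` and `a ∈ {1, -1}`, the ternary self-dual code
`NV^(a)(p)` of length `2(p+1)` contains `2(p+1)` distinct codewords, each of weight `2(p+1)`,
whose rows (read in `{0, 1, -1} ⊆ ℤ`) form a Hadamard matrix of order `2(p+1)`. -/
theorem NV_contains_Hadamard (p : ℕ) [Fact p.Prime] (hp : p % 24 = 5)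
    (a : ℤ) (ha : a = 1 ∨ a = -1) :
    ∃ c : NVIdx p → (NVIdx p → ZMod 3),
      Function.Injective c ∧
      (∀ i, c i ∈ NVcode p a) ∧
      (∀ i, wt (c i) = 2 * (p + 1)) ∧
      IsHadamard (2 * (p + 1)) (Matrix.of fun i j => rho (c i j)) := by
  have hp5 : p % 8 = 5 := by omega
  have hent := NVAux.Hnv_entries hp5 a ha
  have hmul := NVAux.Hnv_mul hp5 a ha
  have hcard : Fintype.card (NVIdx p) = 2 * (p + 1) := by
    simp only [Fintype.card_sum, Fintype.card_option, ZMod.card]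
    omega
  set c : NVIdx p → NVIdx p → ZMod 3 := fun i k => ((Hnv p a i k : ℤ) : ZMod 3) with hcdef
  have hrho : ∀ i k, rho (c i k) = Hnv p a i k := by
    intro i k
    rcases hent i k with h | h <;> simp only [hcdef] <;> rw [h] <;> decide
  have hof : (Matrix.of fun i j => rho (c i j)) = Hnv p a := by
    ext i j
    exact hrho i j
  refine ⟨c, ?_, ?_, ?_, ?_⟩
  · intro i i' hii
    by_contra hne
    have h0 : (Hnv p a * (Hnv p a)ᵀ) i i' = 0 := by
      rw [hmul, Matrix.smul_apply, Matrix.one_apply_ne hne, smul_zero]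
    have hrow : ∀ k, Hnv p a i k = Hnv p a i' k := by
      intro k
      rw [← hrho i k, ← hrho i' k, hii]
    have h1 : (Hnv p a * (Hnv p a)ᵀ) i i' = ∑ k, Hnv p a i k * Hnv p a i k := by
      rw [Matrix.mul_apply]
      exact Finset.sum_congr rfl fun k _ => by rw [Matrix.transpose_apply, ← hrow k]
    have h2 : ∀ k : NVIdx p, Hnv p a i k * Hnv p a i k = 1 := fun k => by
      rcases hent i k with h | h <;> rw [h] <;> norm_num
    rw [h1, Finset.sum_congr rfl fun k _ => h2 k, Finset.sum_const, Finset.card_univ,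
      hcard] at h0
    simp at h0
    omega
  · intro i
    rcases i with j | j
    · have hrow : c (Sum.inl j) = ((NVgen p a).map (Int.cast : ℤ → ZMod 3)) (Sum.inl j)
          + ((NVgen p a).map (Int.cast : ℤ → ZMod 3)) (Sum.inr j) := by
        funext k
        simp only [hcdef, Pi.add_apply, Matrix.map_apply]
        rw [NVAux.Hnv_row_inl a j k]
        push_cast
        ring
      rw [hrow]
      exact Submodule.add_mem _ (Submodule.subset_span ⟨Sum.inl j, rfl⟩)
        (Submodule.subset_span ⟨Sum.inr j, rfl⟩)
    · have hrow : c (Sum.inr j) = ((NVgen p a).map (Int.cast : ℤ → ZMod 3)) (Sum.inr j)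
          - ((NVgen p a).map (Int.cast : ℤ → ZMod 3)) (Sum.inl j) := by
        funext k
        simp only [hcdef, Pi.sub_apply, Matrix.map_apply]
        rw [NVAux.Hnv_row_inr a j k]
        push_cast
        ring
      rw [hrow]
      exact Submodule.sub_mem _ (Submodule.subset_span ⟨Sum.inr j, rfl⟩)
        (Submodule.subset_span ⟨Sum.inl j, rfl⟩)
  · intro i
    have hall : ∀ k, c i k ≠ 0 := by
      intro k
      rcases hent i k with h | h <;> simp only [hcdef] <;> rw [h] <;> decide
    rw [wt, Finset.filter_true_of_mem (fun k _ => hall k), Finset.card_univ, hcard]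
  · constructor
    · intro i j
      rw [Matrix.of_apply, hrho i j]
      exact hent i j
    · rw [hof]
      exact hmul
end

section
/- Let p be a prime with p ≡ 5 (mod 24) and let a ∈ {1,−1}. Then every row of the matrix H_{NV^(a)(p)}, when reduced modulo 3 (identifying the integers 1 and −1 with the elements 1 and 2 of 𝔽₃), is a codeword of the ternary code NV^(a)(p), and each such codeword has weight 2(p+1). -/
open Matrix

section Aux

variable (p : ℕ) [Fact p.Prime]

lemma exists_sq_iff (u : ZMod p) (hu : u ≠ 0) :
    (∃ c : ZMod p, c ≠ 0 ∧ c ^ 2 = u) ↔ IsSquare u := by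
  constructor
  · rintro ⟨c, -, rfl⟩
    exact ⟨c, (pow_two c)⟩
  · rintro ⟨r, rfl⟩
    exact ⟨r, fun h => hu (by simp [h]), (pow_two r)⟩

lemma NVtwo_ne_zero (hp : p % 24 = 5) : (2 : ZMod p) ≠ 0 := by
  have : ((2 : ℕ) : ZMod p) ≠ 0 := by
    rw [Ne, ZMod.natCast_eq_zero_iff]
    intro h
    have := Nat.le_of_dvd (by norm_num) h
    omega
  simpa using this

lemma two_mul_square_iff (hp8 : p % 8 = 5) (hodd : (2 : ZMod p) ≠ 0)
    (u : ZMod p) (hu : u ≠ 0) :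
    IsSquare (2 * u) ↔ ¬ IsSquare u := by
  have hp2 : p ≠ 2 := by omega
  have h2 : ¬ IsSquare (2 : ZMod p) := by
    rw [ZMod.exists_sq_eq_two_iff hp2]; omega
  have hchi2 : quadraticChar (ZMod p) 2 = -1 :=
    quadraticChar_neg_one_iff_not_isSquare.mpr h2
  have hmul : quadraticChar (ZMod p) (2 * u)
      = quadraticChar (ZMod p) 2 * quadraticChar (ZMod p) u := map_mul _ _ _
  rw [← quadraticChar_one_iff_isSquare (mul_ne_zero hodd hu), hmul, hchi2,
    ← quadraticChar_neg_one_iff_not_isSquare]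
  constructor
  · intro h; linarith
  · intro h; rw [h]; ring

lemma neg_square_iff (hp4 : p % 4 ≠ 3) (u : ZMod p) : IsSquare (-u) ↔ IsSquare u := by
  have hm1 : IsSquare (-1 : ZMod p) := ZMod.exists_sq_eq_neg_one_iff.mpr hp4
  constructor
  · intro h
    have := hm1.mul h
    rwa [neg_one_mul, neg_neg] at this
  · intro h
    have := hm1.mul h
    rwa [neg_one_mul] at this

end Aux

section Aux2
variable (p : ℕ) [Fact p.Prime]

lemma RX_of_sq {x y : ZMod p} (h : ∃ c : ZMod p, c ≠ 0 ∧ c ^ 2 = y - x) :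
    RX p x y = 1 ∨ RX p x y = -1 := by
  unfold RX
  simp only [Matrix.of_apply]
  split_ifs <;> first | exact Or.inl rfl | exact Or.inr rfl | tauto

lemma RX_of_not {x y : ZMod p} (h : ¬ ∃ c : ZMod p, c ≠ 0 ∧ c ^ 2 = y - x) :
    RX p x y = 0 := by
  unfold RX
  simp only [Matrix.of_apply]
  split_ifs with h1
  · obtain ⟨c, hc0, hc2, -⟩ := h1
    exact absurd ⟨c, hc0, hc2⟩ h
  · rfl

lemma RY_of_sq {x y : ZMod p} (h : ∃ c : ZMod p, c ≠ 0 ∧ c ^ 2 = 2 * (y - x)) :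
    RY p x y = 1 ∨ RY p x y = -1 := by
  unfold RY
  simp only [Matrix.of_apply]
  split_ifs <;> first | exact Or.inl rfl | exact Or.inr rfl | tauto

lemma RY_of_not {x y : ZMod p} (h : ¬ ∃ c : ZMod p, c ≠ 0 ∧ c ^ 2 = 2 * (y - x)) :
    RY p x y = 0 := by
  unfold RY
  simp only [Matrix.of_apply]
  split_ifs with h1
  · obtain ⟨c, hc0, hc2, -⟩ := h1
    exact absurd ⟨c, hc0, hc2⟩ h
  · rfl

lemma RX_diag (x : ZMod p) : RX p x x = 0 := by
  apply RX_of_not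
  rintro ⟨c, hc0, hc2⟩
  rw [sub_self] at hc2
  exact hc0 (pow_eq_zero_iff (n := 2) (by norm_num) |>.mp hc2)

lemma RY_diag (x : ZMod p) : RY p x x = 0 := by
  apply RY_of_not
  rintro ⟨c, hc0, hc2⟩
  rw [sub_self, mul_zero] at hc2
  exact hc0 (pow_eq_zero_iff (n := 2) (by norm_num) |>.mp hc2)

lemma pairRXRY (hp : p % 24 = 5) (x y : ZMod p) (hxy : x ≠ y) :
    ((RX p x y = 1 ∨ RX p x y = -1) ∧ RY p y x = 0) ∨
      (RX p x y = 0 ∧ (RY p y x = 1 ∨ RY p y x = -1)) := by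
  have hp8 : p % 8 = 5 := by omega
  have hp4 : p % 4 ≠ 3 := by omega
  have h2 : (2 : ZMod p) ≠ 0 := NVtwo_ne_zero p hp
  have hu : y - x ≠ 0 := sub_ne_zero.mpr (Ne.symm hxy)
  have hu' : x - y ≠ 0 := sub_ne_zero.mpr hxy
  have key : IsSquare (2 * (x - y)) ↔ ¬ IsSquare (y - x) := by
    rw [show (2 : ZMod p) * (x - y) = -(2 * (y - x)) by ring,
      neg_square_iff p hp4, two_mul_square_iff p hp8 h2 _ hu]
  by_cases h : IsSquare (y - x)
  · left
    refine ⟨RX_of_sq p ((exists_sq_iff p _ hu).mpr h), RY_of_not p ?_⟩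
    rw [exists_sq_iff p _ (mul_ne_zero h2 hu')]
    exact fun hs => (key.mp hs) h
  · right
    refine ⟨RX_of_not p ?_, RY_of_sq p ?_⟩
    · rw [exists_sq_iff p _ hu]; exact h
    · rw [exists_sq_iff p _ (mul_ne_zero h2 hu')]
      exact key.mpr h

end Aux2

section Aux3
variable (p : ℕ) [Fact p.Prime]

lemma Hnv_row_inl (a : ℤ) (x : Option (ZMod p)) (j : NVIdx p) :
    Hnv p a (Sum.inl x) j = NVgen p a (Sum.inl x) j + NVgen p a (Sum.inr x) j := by
  rcases j with y | y <;>
    simp only [Hnv, NVgen, Bw, Matrix.fromBlocks_apply₁₁, Matrix.fromBlocks_apply₁₂,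
      Matrix.fromBlocks_apply₂₁, Matrix.fromBlocks_apply₂₂, Matrix.add_apply,
      Matrix.sub_apply, Matrix.neg_apply, Matrix.smul_apply, Matrix.transpose_apply,
      Matrix.one_apply, Sum.inl.injEq, Sum.inr.injEq, reduceCtorEq, ite_false, ite_true,
      if_false, mul_zero, mul_one, smul_eq_mul] <;>
    ring

lemma Hnv_row_inr (a : ℤ) (x : Option (ZMod p)) (j : NVIdx p) :
    Hnv p a (Sum.inr x) j = NVgen p a (Sum.inr x) j - NVgen p a (Sum.inl x) j := by
  rcases j with y | y <;>
    simp only [Hnv, NVgen, Bw, Matrix.fromBlocks_apply₁₁, Matrix.fromBlocks_apply₁₂,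
      Matrix.fromBlocks_apply₂₁, Matrix.fromBlocks_apply₂₂, Matrix.add_apply,
      Matrix.sub_apply, Matrix.neg_apply, Matrix.smul_apply, Matrix.transpose_apply,
      Matrix.one_apply, Sum.inl.injEq, Sum.inr.injEq, reduceCtorEq, ite_false, ite_true,
      if_false, mul_zero, mul_one, smul_eq_mul] <;>
    ring

lemma Hnv_entry (hp : p % 24 = 5) (a : ℤ) (ha : a = 1 ∨ a = -1) (i j : NVIdx p) :
    Hnv p a i j = 1 ∨ Hnv p a i j = -1 := by
  rcases i with (_ | x) | (_ | x) <;> rcases j with (_ | y) | (_ | y) <;>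
    simp only [Hnv, Matrix.fromBlocks_apply₁₁, Matrix.fromBlocks_apply₁₂,
      Matrix.fromBlocks_apply₂₁, Matrix.fromBlocks_apply₂₂, Matrix.add_apply,
      Matrix.sub_apply, Matrix.neg_apply, Matrix.smul_apply, Matrix.transpose_apply,
      Matrix.one_apply, Xmat, Ymat, Matrix.of_apply, smul_eq_mul, Option.some.injEq,
      reduceCtorEq, ite_false, ite_true, if_false, mul_one, mul_zero]
  all_goals try (rcases ha with rfl | rfl <;> norm_num)
  all_goals
    rcases eq_or_ne x y with rfl | hxy
  all_goals try simp [RX_diag, RY_diag]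
  all_goals
    rcases pairRXRY p hp x y hxy with ⟨hA | hA, hB⟩ | ⟨hA, hB | hB⟩ <;>
    rcases pairRXRY p hp y x hxy.symm with ⟨hC | hC, hD⟩ | ⟨hC, hD | hD⟩ <;>
    simp [hA, hB, hC, hD, hxy]

end Aux3

/-- for a prime `p ≡ 5 (mod 24)` and `a ∈ {1, -1}`, every row of `H_{NV^(a)(p)}`
reduced modulo 3 is a codeword of `NV^(a)(p)` of weight `2(p+1)`. -/
theorem Hnv_rows_are_codewords (p : ℕ) [Fact p.Prime] (hp : p % 24 = 5)
    (a : ℤ) (ha : a = 1 ∨ a = -1) (i : NVIdx p) :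
    (fun j => ((Hnv p a i j : ℤ) : ZMod 3)) ∈ NVcode p a ∧
      wt (fun j => ((Hnv p a i j : ℤ) : ZMod 3)) = 2 * (p + 1) := by
  constructor
  · have hmem : ∀ k : NVIdx p,
        (fun j => ((NVgen p a k j : ℤ) : ZMod 3)) ∈ NVcode p a := fun k =>
      Submodule.subset_span ⟨k, rfl⟩
    rcases i with x | x
    · have hdec : (fun j => ((Hnv p a (Sum.inl x) j : ℤ) : ZMod 3))
          = (fun j => ((NVgen p a (Sum.inl x) j : ℤ) : ZMod 3))
            + (fun j => ((NVgen p a (Sum.inr x) j : ℤ) : ZMod 3)) := by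
        funext j
        simp [Hnv_row_inl p a x j]
      rw [hdec]
      exact Submodule.add_mem _ (hmem _) (hmem _)
    · have hdec : (fun j => ((Hnv p a (Sum.inr x) j : ℤ) : ZMod 3))
          = (fun j => ((NVgen p a (Sum.inr x) j : ℤ) : ZMod 3))
            - (fun j => ((NVgen p a (Sum.inl x) j : ℤ) : ZMod 3)) := by
        funext j
        simp [Hnv_row_inr p a x j]
      rw [hdec]
      exact Submodule.sub_mem _ (hmem _) (hmem _)
  · have hne : ∀ j, ((Hnv p a i j : ℤ) : ZMod 3) ≠ 0 := by
      intro j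
      rcases Hnv_entry p hp a ha i j with h | h <;> rw [h] <;> decide
    unfold wt
    rw [Finset.filter_true_of_mem fun j _ => hne j, Finset.card_univ]
    simp only [NVIdx, Fintype.card_sum, Fintype.card_option, ZMod.card]
    ring
end

section
/- Let p be a prime with p ≡ 5 (mod 8). Then the (p+1)×(p+1) integer matrices X and Y satisfy Xᵀ = −X, Yᵀ = −Y, and XY = YX. -/
open Matrix

section Aux

variable (p : ℕ) [Fact p.Prime]

/-- The common entry function. -/
def Fv [NeZero p] (x : ZMod p) : ℤ :=
  if ∃ c : ZMod p, c ≠ 0 ∧ c ^ 2 = x ∧ ∃ d : ZMod p, d ^ 2 = c then 1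
  else if ∃ c : ZMod p, c ≠ 0 ∧ c ^ 2 = x then -1
  else 0

lemma p_ne_two (hp : p % 8 = 5) : (2 : ZMod p) ≠ 0 := by
  intro h
  have h2 : ((2 : ℕ) : ZMod p) = 0 := by exact_mod_cast h
  rw [ZMod.natCast_eq_zero_iff] at h2
  have := Nat.le_of_dvd (by norm_num) h2
  omega

lemma neg_one_not_fourth (hp : p % 8 = 5) : ¬ ∃ d : ZMod p, d ^ 4 = -1 := by
  rintro ⟨d, hd⟩
  have hd0 : d ≠ 0 := by
    intro h
    rw [h] at hd
    have : (1 : ZMod p) = 0 := by linear_combination hd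
    exact one_ne_zero this
  have h8 : d ^ 8 = 1 := by
    have : d ^ 8 = (d ^ 4) ^ 2 := by ring
    rw [this, hd]; ring
  have h1 : orderOf d ∣ 8 := orderOf_dvd_iff_pow_eq_one.mpr h8
  have h2 : orderOf d ∣ p - 1 :=
    orderOf_dvd_iff_pow_eq_one.mpr (ZMod.pow_card_sub_one_eq_one hd0)
  have hg : Nat.gcd 8 (p - 1) = 4 := by
    have h4 : (p - 1) % 8 = 4 := by omega
    rw [Nat.gcd_rec, h4]
    decide
  have h3 : orderOf d ∣ 4 := hg ▸ Nat.dvd_gcd h1 h2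
  have h4 : d ^ 4 = 1 := orderOf_dvd_iff_pow_eq_one.mp h3
  rw [hd] at h4
  have : (2 : ZMod p) = 0 := by linear_combination -h4
  exact p_ne_two p hp this

lemma exists_i (hp : p % 8 = 5) : ∃ i : ZMod p, i ^ 2 = -1 := by
  have : IsSquare (-1 : ZMod p) := ZMod.exists_sq_eq_neg_one_iff.mpr (by omega)
  obtain ⟨r, hr⟩ := this
  exact ⟨r, by rw [pow_two]; exact hr.symm⟩

/-- Product of two nonsquares is a square. -/
lemma nonsq_mul (hp : p % 8 = 5) (a b : ZMod p) (ha : a ≠ 0) (hb : b ≠ 0)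
    (hna : ¬ IsSquare a) (hnb : ¬ IsSquare b) : IsSquare (a * b) := by
  have hchar : ringChar (ZMod p) ≠ 2 := by
    rw [ZMod.ringChar_zmod_n]
    omega
  have hcard : Fintype.card (ZMod p) = p := ZMod.card p
  have ha' : a ^ (p / 2) = -1 := by
    rcases FiniteField.pow_dichotomy hchar ha with h | h
    · rw [hcard] at h
      exact absurd ((ZMod.euler_criterion p ha).mpr h) hna
    · rwa [hcard] at h
  have hb' : b ^ (p / 2) = -1 := by
    rcases FiniteField.pow_dichotomy hchar hb with h | h
    · rw [hcard] at h
      exact absurd ((ZMod.euler_criterion p hb).mpr h) hnb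
    · rwa [hcard] at h
  refine (ZMod.euler_criterion p (mul_ne_zero ha hb)).mpr ?_
  rw [mul_pow, ha', hb']
  ring

lemma Fv_neg (hp : p % 8 = 5) (x : ZMod p) : Fv p (-x) = - Fv p x := by
  obtain ⟨i, hi⟩ := exists_i p hp
  have hi0 : i ≠ 0 := by
    intro h
    rw [h] at hi
    have : (1 : ZMod p) = 0 := by linear_combination hi
    exact one_ne_zero this
  have hins : ¬ IsSquare i := by
    rintro ⟨e, he⟩
    exact neg_one_not_fourth p hp ⟨e, by rw [← hi, he]; ring⟩
  -- S y → S (-y)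
  have hS : ∀ y : ZMod p, (∃ c : ZMod p, c ≠ 0 ∧ c ^ 2 = y) →
      (∃ c : ZMod p, c ≠ 0 ∧ c ^ 2 = -y) := by
    rintro y ⟨c, hc0, hc2⟩
    exact ⟨i * c, mul_ne_zero hi0 hc0, by rw [mul_pow, hi, hc2]; ring⟩
  -- P y → P (-y) → False
  have hPP : ∀ y : ZMod p,
      (∃ c : ZMod p, c ≠ 0 ∧ c ^ 2 = y ∧ ∃ d : ZMod p, d ^ 2 = c) →
      (∃ c : ZMod p, c ≠ 0 ∧ c ^ 2 = -y ∧ ∃ d : ZMod p, d ^ 2 = c) → False := by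
    rintro y ⟨c, hc0, hc2, d, hd⟩ ⟨c', hc0', hc2', d', hd'⟩
    have hd0 : d ≠ 0 := by
      intro h; rw [h] at hd; exact hc0 (by rw [← hd]; ring)
    refine neg_one_not_fourth p hp ⟨d' * d⁻¹, ?_⟩
    have hd4 : d ^ 4 = y := by rw [show d ^ 4 = (d ^ 2) ^ 2 by ring, hd, hc2]
    have hd4' : d' ^ 4 = -y := by rw [show d' ^ 4 = (d' ^ 2) ^ 2 by ring, hd', hc2']
    have hy0 : y ≠ 0 := fun h =>
      hc0 (pow_eq_zero_iff (n := 2) (by norm_num) |>.mp (hc2.trans h))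
    rw [mul_pow, hd4', inv_pow, hd4]
    field_simp
  -- S y ∧ ¬ P y → P (-y)
  have hSP : ∀ y : ZMod p, (∃ c : ZMod p, c ≠ 0 ∧ c ^ 2 = y) →
      ¬ (∃ c : ZMod p, c ≠ 0 ∧ c ^ 2 = y ∧ ∃ d : ZMod p, d ^ 2 = c) →
      (∃ c : ZMod p, c ≠ 0 ∧ c ^ 2 = -y ∧ ∃ d : ZMod p, d ^ 2 = c) := by
    rintro y ⟨c, hc0, hc2⟩ hnP
    have hcns : ¬ IsSquare c := by
      rintro ⟨e, he⟩
      exact hnP ⟨c, hc0, hc2, e, by rw [pow_two]; exact he.symm⟩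
    obtain ⟨e, he⟩ := nonsq_mul p hp i c hi0 hc0 hins hcns
    refine ⟨i * c, mul_ne_zero hi0 hc0, by rw [mul_pow, hi, hc2]; ring, e, ?_⟩
    rw [pow_two]; exact he.symm
  unfold Fv
  by_cases hPx : ∃ c : ZMod p, c ≠ 0 ∧ c ^ 2 = x ∧ ∃ d : ZMod p, d ^ 2 = c
  · have hSx : ∃ c : ZMod p, c ≠ 0 ∧ c ^ 2 = x := by
      obtain ⟨c, hc0, hc2, _⟩ := hPx; exact ⟨c, hc0, hc2⟩
    rw [if_neg (fun h => hPP x hPx h), if_pos (hS x hSx), if_pos hPx]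
    try norm_num
  · by_cases hSx : ∃ c : ZMod p, c ≠ 0 ∧ c ^ 2 = x
    · rw [if_pos (hSP x hSx hPx), if_neg hPx, if_pos hSx]
      try norm_num
    · have hSn : ¬ ∃ c : ZMod p, c ≠ 0 ∧ c ^ 2 = -x := fun h => hSx (by simpa using hS (-x) h)
      have hPn : ¬ ∃ c : ZMod p, c ≠ 0 ∧ c ^ 2 = -x ∧ ∃ d : ZMod p, d ^ 2 = c := by
        rintro ⟨c, hc0, hc2, _⟩; exact hSn ⟨c, hc0, hc2⟩
      rw [if_neg hPn, if_neg hSn, if_neg hPx, if_neg hSx]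
      norm_num

lemma Fv_sum (hp : p % 8 = 5) : ∑ x : ZMod p, Fv p x = 0 := by
  have h : ∑ x : ZMod p, Fv p (-x) = ∑ x : ZMod p, Fv p x :=
    Fintype.sum_equiv (Equiv.neg (ZMod p)) _ _ (fun x => rfl)
  simp only [Fv_neg p hp] at h
  rw [Finset.sum_neg_distrib] at h
  omega

lemma Fv_sum_comp (hp : p % 8 = 5) (g : ZMod p → ZMod p) (hg : Function.Bijective g) :
    ∑ x : ZMod p, Fv p (g x) = 0 := by
  rw [Fintype.sum_bijective g hg _ (Fv p) (fun x => rfl)]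
  exact Fv_sum p hp

lemma RX_eq [NeZero p] (a b : ZMod p) : RX p a b = Fv p (b - a) := rfl
lemma RY_eq [NeZero p] (a b : ZMod p) : RY p a b = Fv p (2 * (b - a)) := rfl

end Aux

/-- for a prime `p ≡ 5 (mod 8)`, the matrices `X` and `Y` satisfy
`Xᵀ = -X`, `Yᵀ = -Y` and `XY = YX`. -/
theorem Xmat_Ymat_skew_and_commute (p : ℕ) [Fact p.Prime] (hp : p % 8 = 5) :
    (Xmat p)ᵀ = -(Xmat p) ∧ (Ymat p)ᵀ = -(Ymat p) ∧ Xmat p * Ymat p = Ymat p * Xmat p := by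
  have h2 : (2 : ZMod p) ≠ 0 := p_ne_two p hp
  refine ⟨?_, ?_, ?_⟩
  · ext i j
    cases i <;> cases j <;>
      simp only [Xmat, transpose_apply, Matrix.neg_apply, Matrix.of_apply]
    all_goals try ring1
    all_goals
      rename_i a b
      rw [RX_eq, RX_eq, show a - b = -(b - a) by ring, Fv_neg p hp]
  · ext i j
    cases i <;> cases j <;>
      simp only [Ymat, transpose_apply, Matrix.neg_apply, Matrix.of_apply]
    all_goals try ring1
    all_goals
      rename_i a b
      rw [RY_eq, RY_eq, show 2 * (a - b) = -(2 * (b - a)) by ring, Fv_neg p hp]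
  · ext i j
    rw [Matrix.mul_apply, Matrix.mul_apply, Fintype.sum_option, Fintype.sum_option]
    cases i <;> cases j <;>
      simp only [Xmat, Ymat, Matrix.of_apply]
    · simp
    · rename_i b
      simp only [zero_mul, mul_zero, one_mul, zero_add, Finset.sum_const_zero, add_zero]
      rw [show ∑ c : ZMod p, RY p c b = 0 from ?_]
      · simp only [RY_eq]
        exact Fv_sum_comp p hp (fun c => 2 * (b - c))
          ((Equiv.mulLeft₀ (2 : ZMod p) h2).bijective.comp (Equiv.subLeft b).bijective)
    · rename_i a
      simp only [mul_zero, zero_mul, mul_neg_one, add_zero, zero_add, Finset.sum_const_zero]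
      rw [show ∑ c : ZMod p, -(RY p a c) = 0 from ?_]
      · simp only [RY_eq]
        rw [Finset.sum_neg_distrib,
          Fv_sum_comp p hp (fun c => 2 * (c - a))
            ((Equiv.mulLeft₀ (2 : ZMod p) h2).bijective.comp (Equiv.subRight a).bijective)]
        ring
    · rename_i a b
      simp only [mul_zero, zero_mul, neg_one_mul, zero_add, add_zero, neg_zero]
      simp only [RX_eq, RY_eq]
      refine Fintype.sum_bijective (fun c => a + b - c)
        (Function.Involutive.bijective (fun c => by ring)) _ _ (fun c => ?_)
      rw [show (a + b - c) - a = b - c by ring, show b - (a + b - c) = c - a by ring]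
      ring
end

section
/- Let F be a field, let m be a positive integer, and let H be a 2m × 2m matrix over F. If H + Hᵀ is invertible and H Hᵀ = 0, then the rank of H equals m. -/
open Matrix

lemma my_rank_add_le {F : Type*} [Field F] {n : Type*} [Fintype n] [DecidableEq n]
    (A B : Matrix n n F) : (A + B).rank ≤ A.rank + B.rank := by
  rw [Matrix.rank, Matrix.rank, Matrix.rank, Matrix.mulVecLin_add]
  calc Module.finrank F ↥(LinearMap.range (A.mulVecLin + B.mulVecLin))
      ≤ Module.finrank F ↥(LinearMap.range A.mulVecLin ⊔ LinearMap.range B.mulVecLin) := by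
        apply Submodule.finrank_mono
        rintro _ ⟨x, rfl⟩
        exact Submodule.add_mem_sup (LinearMap.mem_range_self _ x) (LinearMap.mem_range_self _ x)
    _ ≤ _ := (Submodule.finrank_add_le_finrank_add_finrank _ _)

/-- if `H` is a `2m × 2m` matrix over a field `F` (with `m` a positive integer)
such that `H + Hᵀ` is invertible and `H Hᵀ = 0`, then the rank of `H` equals `m`. -/
theorem rank_eq_of_add_transpose_isUnit_of_mul_transpose_eq_zero
    (F : Type*) [Field F] (m : ℕ) (hm : 0 < m) (H : Matrix (Fin (2 * m)) (Fin (2 * m)) F)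
    (h1 : IsUnit (H + Hᵀ)) (h2 : H * Hᵀ = 0) :
    H.rank = m := by
  have hub : H.rank + H.rank ≤ 2 * m := by
    have := Matrix.rank_add_rank_le_card_of_mul_eq_zero h2
    rwa [Matrix.rank_transpose, Fintype.card_fin] at this
  have hlb : 2 * m ≤ H.rank + H.rank := by
    have h3 : (H + Hᵀ).rank = 2 * m := by
      rw [Matrix.rank_of_isUnit _ h1, Fintype.card_fin]
    calc 2 * m = (H + Hᵀ).rank := h3.symm
      _ ≤ H.rank + Hᵀ.rank := my_rank_add_le _ _
      _ = H.rank + H.rank := by rw [Matrix.rank_transpose]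
  omega
end

section
/- Let G be an additively written finite abelian group of order v = 2m + 1, and let D₁, D₂ be (2m+1, m, m−1) supplementary difference sets in G. Fix an ordering of the elements of G and let M₁ and M₂ be the type-1 matrices of D₁ and D₂ respectively. Then the (2v+2) × (2v+2) matrix H(D₁,D₂) = [[1, 1, 𝟙_v, −𝟙_v], [−1, 1, −𝟙_v, −𝟙_v], [−𝟙_vᵀ, 𝟙_vᵀ, −M₁, −M₂], [𝟙_vᵀ, 𝟙_vᵀ, M₂ᵀ, −M₁ᵀ]] is a Hadamard matrix of order 4(m+1), where 𝟙_v denotes the all-one row vector of length v. -/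
open Matrix

/-- `D₁`, `D₂` are `(v, k, λ)` supplementary difference sets in `G`: `G` has order `v`,
`|D₁| = |D₂| = k`, and every nonzero `g ∈ G` is represented exactly `λ` times as a
difference `x - y` with `x, y ∈ Dᵢ`, counting over both `i = 1, 2`. -/
def IsSDS {G : Type*} [AddCommGroup G] [Fintype G] [DecidableEq G]
    (v k lam : ℕ) (D₁ D₂ : Finset G) : Prop :=
  Fintype.card G = v ∧ D₁.card = k ∧ D₂.card = k ∧
    ∀ g : G, g ≠ 0 →
      ((D₁ ×ˢ D₁).filter fun xy => xy.1 - xy.2 = g).card +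
        ((D₂ ×ˢ D₂).filter fun xy => xy.1 - xy.2 = g).card = lam

/-- The type-1 matrix of a subset `D ⊆ G` (for a fixed ordering of `G`, here the indexing of
rows and columns by `G` itself): entry `(i, j)` is `1` if `j - i ∈ D` and `-1` otherwise. -/
def type1 {G : Type*} [AddCommGroup G] [DecidableEq G] (D : Finset G) : Matrix G G ℤ :=
  Matrix.of fun i j => if j - i ∈ D then 1 else -1

/-- The matrix
`H(D₁,D₂) = [[1, 1, 𝟙, -𝟙], [-1, 1, -𝟙, -𝟙], [-𝟙ᵀ, 𝟙ᵀ, -M₁, -M₂], [𝟙ᵀ, 𝟙ᵀ, M₂ᵀ, -M₁ᵀ]]`,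
where `M₁`, `M₂` are the type-1 matrices of `D₁`, `D₂`. -/
def HSDS {G : Type*} [AddCommGroup G] [DecidableEq G] (D₁ D₂ : Finset G) :
    Matrix (Fin 2 ⊕ (G ⊕ G)) (Fin 2 ⊕ (G ⊕ G)) ℤ :=
  Matrix.fromBlocks
    !![1, 1; -1, 1]
    (Matrix.of fun i j =>
      if i = 0 then Sum.elim (fun _ => (1 : ℤ)) (fun _ => -1) j else -1)
    (Matrix.of fun i j =>
      Sum.elim (fun _ => if j = 0 then (-1 : ℤ) else 1) (fun _ => 1) i)
    (Matrix.fromBlocks (-(type1 D₁)) (-(type1 D₂)) (type1 D₂)ᵀ (-(type1 D₁)ᵀ))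

namespace SDSAux

set_option linter.unusedSectionVars false

variable {G : Type*} [AddCommGroup G] [Fintype G] [DecidableEq G]

/-- The ±1 characteristic function of `D`. -/
def chi (D : Finset G) (g : G) : ℤ := if g ∈ D then 1 else -1

lemma chi_mul_self (D : Finset G) (g : G) : chi D g * chi D g = 1 := by
  unfold chi; split <;> norm_num

lemma chi_cases (D : Finset G) (g : G) : chi D g = 1 ∨ chi D g = -1 := by
  unfold chi; split <;> simp

lemma sum_chi (D : Finset G) : ∑ g, chi D g = 2 * D.card - Fintype.card G := by
  have h : ∀ g : G, chi D g = 2 * (if g ∈ D then (1:ℤ) else 0) - 1 := by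
    intro g; unfold chi; split <;> ring
  simp only [h]
  rw [Finset.sum_sub_distrib, ← Finset.mul_sum, Finset.sum_ite_mem, Finset.univ_inter,
    Finset.sum_const, Finset.sum_const, Finset.card_univ]
  simp [mul_comm]

lemma sum_chi_sub (D : Finset G) (a : G) : ∑ g, chi D (g - a) = 2 * D.card - Fintype.card G := by
  rw [← sum_chi D]
  exact Fintype.sum_equiv (Equiv.subRight a) _ _ (fun g => rfl)

lemma sum_chi_sub' (D : Finset G) (a : G) : ∑ g, chi D (a - g) = 2 * D.card - Fintype.card G := by
  rw [← sum_chi D]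
  exact Fintype.sum_equiv (Equiv.subLeft a) _ _ (fun g => rfl)

lemma quad (D : Finset G) (c : G) :
    ∑ x, chi D (x + c) * chi D x =
      4 * (((D ×ˢ D).filter fun xy => xy.1 - xy.2 = c).card : ℤ)
        - 4 * D.card + Fintype.card G := by
  have h1 : ∀ x : G, chi D (x + c) * chi D x =
      4 * (if x + c ∈ D ∧ x ∈ D then (1:ℤ) else 0)
        - 2 * (if x + c ∈ D then (1:ℤ) else 0) - 2 * (if x ∈ D then (1:ℤ) else 0) + 1 := by
    intro x; unfold chi
    by_cases h1 : x + c ∈ D <;> by_cases h2 : x ∈ D <;> simp [h1, h2]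
  have hN : (Finset.univ.filter fun x : G => x + c ∈ D ∧ x ∈ D).card
      = ((D ×ˢ D).filter fun xy => xy.1 - xy.2 = c).card := by
    apply Finset.card_bij' (fun x _ => (x + c, x)) (fun xy _ => xy.2)
    · intro x hx
      simp only [Finset.mem_filter, Finset.mem_univ, true_and] at hx
      simp [Finset.mem_filter, Finset.mem_product, hx.1, hx.2]
    · intro xy hxy
      simp only [Finset.mem_filter, Finset.mem_product] at hxy
      have h2 : xy.2 + c = xy.1 := by rw [← hxy.2]; abel
      simp [Finset.mem_filter, h2, hxy.1.1, hxy.1.2]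
    · intro x _; rfl
    · intro xy hxy
      simp only [Finset.mem_filter, Finset.mem_product] at hxy
      have h2 : xy.2 + c = xy.1 := by rw [← hxy.2]; abel
      ext <;> simp [h2]
  have hs1 : ∑ x : G, (if x + c ∈ D then (1:ℤ) else 0) = D.card := by
    rw [show (D.card : ℤ) = ∑ x : G, (if x ∈ D then (1:ℤ) else 0) by
      rw [Finset.sum_ite_mem, Finset.univ_inter, Finset.sum_const]; simp]
    exact Fintype.sum_equiv (Equiv.addRight c) _ _ (fun g => rfl)
  have hs2 : ∑ x : G, (if x ∈ D then (1:ℤ) else 0) = D.card := by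
    rw [Finset.sum_ite_mem, Finset.univ_inter, Finset.sum_const]; simp
  have hs0 : ∑ x : G, (if x + c ∈ D ∧ x ∈ D then (1:ℤ) else 0)
      = ((D ×ˢ D).filter fun xy => xy.1 - xy.2 = c).card := by
    rw [Finset.sum_boole, ← hN]
  simp only [h1]
  rw [Finset.sum_add_distrib, Finset.sum_sub_distrib, Finset.sum_sub_distrib,
    ← Finset.mul_sum, ← Finset.mul_sum, ← Finset.mul_sum, hs0, hs1, hs2,
    Finset.sum_const, Finset.card_univ]
  simp only [nsmul_eq_mul, mul_one]
  ring

lemma key2 {m : ℕ} {D₁ D₂ : Finset G} (h : IsSDS (2*m+1) m (m-1) D₁ D₂)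
    {a b : G} (hab : a ≠ b) :
    (∑ g, chi D₁ (g - a) * chi D₁ (g - b)) + (∑ g, chi D₂ (g - a) * chi D₂ (g - b)) = -2 := by
  obtain ⟨hv, h1, h2, hl⟩ := h
  have hshift : ∀ D : Finset G,
      ∑ g, chi D (g - a) * chi D (g - b) = ∑ x, chi D (x + (b - a)) * chi D x := by
    intro D
    apply Fintype.sum_equiv (Equiv.subRight b)
    intro g
    simp only [Equiv.subRight_apply]
    rw [show g - b + (b - a) = g - a by abel]
  have hc : b - a ≠ 0 := sub_ne_zero.mpr (Ne.symm hab)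
  have hm : 1 ≤ m := by
    have h2le : 2 ≤ Fintype.card G := Fintype.one_lt_card_iff_nontrivial.mpr ⟨a, b, hab⟩
    omega
  have hN := hl (b - a) hc
  rw [hshift D₁, hshift D₂, quad, quad, h1, h2, hv]
  have : ((((D₁ ×ˢ D₁).filter fun xy => xy.1 - xy.2 = (b-a)).card : ℤ)
      + (((D₂ ×ˢ D₂).filter fun xy => xy.1 - xy.2 = (b-a)).card : ℤ)) = (m : ℤ) - 1 := by
    have : (((D₁ ×ˢ D₁).filter fun xy => xy.1 - xy.2 = (b-a)).card
      + ((D₂ ×ˢ D₂).filter fun xy => xy.1 - xy.2 = (b-a)).card) + 1 = m := by omega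
    push_cast [← this]; ring
  push_cast
  linarith

lemma mixed (A B : Finset G) (a b : G) :
    ∑ g, chi A (g - a) * chi B (b - g) = ∑ g, chi B (g - a) * chi A (b - g) := by
  apply Fintype.sum_equiv (Equiv.subLeft (a + b))
  intro g
  simp only [Equiv.subLeft_apply]
  rw [show a + b - g - a = b - g by abel, show b - (a + b - g) = g - a by abel, mul_comm]

lemma mixed' (A B : Finset G) (a b : G) :
    ∑ x, chi B (a - x) * chi A (x - b) = ∑ x, chi A (a - x) * chi B (x - b) := by
  apply Fintype.sum_equiv (Equiv.subLeft (a + b))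
  intro g
  simp only [Equiv.subLeft_apply]
  rw [show a - (a + b - g) = g - b by abel, show a + b - g - b = a - g by abel, mul_comm]

lemma chiflip (A : Finset G) (a b : G) :
    ∑ g, chi A (a - g) * chi A (b - g) = ∑ g, chi A (g - b) * chi A (g - a) := by
  apply Fintype.sum_equiv (Equiv.subLeft (a + b))
  intro g
  simp only [Equiv.subLeft_apply]
  rw [show a + b - g - b = a - g by abel, show a + b - g - a = b - g by abel]

variable (D₁ D₂ : Finset G)

lemma H_ll (a b : Fin 2) : HSDS D₁ D₂ (.inl a) (.inl b) = !![1,1;-1,1] a b := rfl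
lemma H_lgl (a : Fin 2) (g : G) :
    HSDS D₁ D₂ (.inl a) (.inr (.inl g)) = if a = 0 then 1 else -1 := rfl
lemma H_lgr (a : Fin 2) (g : G) : HSDS D₁ D₂ (.inl a) (.inr (.inr g)) = -1 := by
  show (if a = 0 then (-1:ℤ) else -1) = -1
  rw [ite_self]
lemma H_gll (g : G) (b : Fin 2) :
    HSDS D₁ D₂ (.inr (.inl g)) (.inl b) = if b = 0 then -1 else 1 := rfl
lemma H_grl (g : G) (b : Fin 2) : HSDS D₁ D₂ (.inr (.inr g)) (.inl b) = 1 := rfl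
lemma H_glgl (g g' : G) :
    HSDS D₁ D₂ (.inr (.inl g)) (.inr (.inl g')) = -(chi D₁ (g' - g)) := rfl
lemma H_glgr (g g' : G) :
    HSDS D₁ D₂ (.inr (.inl g)) (.inr (.inr g')) = -(chi D₂ (g' - g)) := rfl
lemma H_grgl (g g' : G) :
    HSDS D₁ D₂ (.inr (.inr g)) (.inr (.inl g')) = chi D₂ (g - g') := rfl
lemma H_grgr (g g' : G) :
    HSDS D₁ D₂ (.inr (.inr g)) (.inr (.inr g')) = -(chi D₁ (g - g')) := rfl

end SDSAux

open SDSAux in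
/-- if `D₁`, `D₂` are `(2m+1, m, m-1)` supplementary difference sets in a finite
abelian group `G` of order `v = 2m + 1`, then `H(D₁, D₂)` is a Hadamard matrix of order
`4(m+1) = 2v + 2`. -/
theorem HSDS_isHadamard {G : Type*} [AddCommGroup G] [Fintype G] [DecidableEq G]
    (m : ℕ) (D₁ D₂ : Finset G) (h : IsSDS (2 * m + 1) m (m - 1) D₁ D₂) :
    IsHadamard (4 * (m + 1)) (HSDS D₁ D₂) := by
  have hv : (Fintype.card G : ℤ) = 2 * m + 1 := by exact_mod_cast h.1
  have h1 : (D₁.card : ℤ) = m := by exact_mod_cast h.2.1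
  have h2 : (D₂.card : ℤ) = m := by exact_mod_cast h.2.2.1
  have e1 : ∀ a : G, ∑ g, chi D₁ (g - a) = -1 := by
    intro a; rw [sum_chi_sub, h1, hv]; ring
  have e2 : ∀ a : G, ∑ g, chi D₂ (g - a) = -1 := by
    intro a; rw [sum_chi_sub, h2, hv]; ring
  have e1' : ∀ a : G, ∑ g, chi D₁ (a - g) = -1 := by
    intro a; rw [sum_chi_sub', h1, hv]; ring
  have e2' : ∀ a : G, ∑ g, chi D₂ (a - g) = -1 := by
    intro a; rw [sum_chi_sub', h2, hv]; ring
  constructor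
  · rintro (a | g | g) (b | g' | g')
    · fin_cases a <;> fin_cases b <;> simp [H_ll]
    · rw [H_lgl]; split <;> simp
    · rw [H_lgr]; simp
    · rw [H_gll]; split <;> simp
    · rw [H_glgl]
      rcases chi_cases D₁ (g' - g) with hc | hc <;> rw [hc] <;> simp
    · rw [H_glgr]
      rcases chi_cases D₂ (g' - g) with hc | hc <;> rw [hc] <;> simp
    · rw [H_grl]; simp
    · rw [H_grgl]; exact chi_cases D₂ (g - g')
    · rw [H_grgr]
      rcases chi_cases D₁ (g - g') with hc | hc <;> rw [hc] <;> simp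
  · ext i j
    rw [Matrix.mul_apply]
    simp only [Matrix.transpose_apply, Matrix.smul_apply, Matrix.one_apply, smul_eq_mul]
    rw [Fintype.sum_sum_type, Fintype.sum_sum_type]
    rcases i with a | g | g <;> rcases j with b | g' | g'
    · -- (Fin 2, Fin 2)
      simp only [H_ll, H_lgl, H_lgr]
      fin_cases a <;> fin_cases b <;>
        simp [Fin.sum_univ_two, Finset.sum_const, Finset.card_univ, hv] <;>
        push_cast <;> ring
    · -- (Fin 2, G left)
      simp only [H_ll, H_lgl, H_lgr, H_gll, H_glgl, H_glgr, Sum.inl.injEq]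
      fin_cases a <;>
        simp [Fin.sum_univ_two, Finset.sum_neg_distrib, e1, e2, e1', e2']
    · -- (Fin 2, G right)
      simp only [H_ll, H_lgl, H_lgr, H_grl, H_grgl, H_grgr, Sum.inl.injEq]
      fin_cases a <;>
        simp [Fin.sum_univ_two, Finset.sum_neg_distrib, e1, e2, e1', e2']
    · -- (G left, Fin 2)
      simp only [H_ll, H_gll, H_glgl, H_glgr, H_lgl, H_lgr]
      fin_cases b <;>
        simp [Fin.sum_univ_two, Finset.sum_neg_distrib, e1, e2, e1', e2']
    · -- (G left, G left): diagonal block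
      simp only [H_gll, H_glgl, H_glgr, Sum.inr.injEq, Sum.inl.injEq, Fin.sum_univ_two,
        neg_mul_neg, reduceIte, Fin.isValue]
      by_cases hg : g = g'
      · subst hg
        simp only [if_pos rfl, chi_mul_self, Finset.sum_const, Finset.card_univ,
          nsmul_eq_mul, mul_one]
        rw [hv]; push_cast; ring_nf
      · rw [if_neg hg, if_neg (show ¬(1:Fin 2) = 0 by decide)]
        have hk := key2 h hg
        linarith [hk]
    · -- (G left, G right): mixed
      simp only [H_gll, H_grl, H_glgl, H_glgr, H_grgl, H_grgr, Fin.sum_univ_two,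
        Fin.isValue, reduceIte, mul_one, neg_mul, neg_neg, Finset.sum_neg_distrib]
      rw [mixed D₁ D₂ g g']
      simp
    · -- (G right, Fin 2)
      simp only [H_ll, H_grl, H_grgl, H_grgr, H_lgl, H_lgr]
      fin_cases b <;>
        simp [Fin.sum_univ_two, Finset.sum_neg_distrib, e1, e2, e1', e2']
    · -- (G right, G left): mixed
      simp only [H_grl, H_gll, H_grgl, H_grgr, H_glgl, H_glgr, Fin.sum_univ_two,
        Fin.isValue, reduceIte, one_mul, mul_neg, neg_mul, neg_neg,
        Finset.sum_neg_distrib]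
      rw [mixed' D₁ D₂ g g']
      simp
    · -- (G right, G right): diagonal block
      simp only [H_grl, H_grgl, H_grgr, Sum.inr.injEq, Fin.sum_univ_two, neg_mul_neg,
        one_mul, mul_one]
      by_cases hg : g = g'
      · subst hg
        simp only [if_pos rfl, chi_mul_self, Finset.sum_const, Finset.card_univ,
          nsmul_eq_mul, mul_one]
        rw [hv]; push_cast; ring_nf
      · rw [if_neg hg]
        rw [chiflip D₂ g g', chiflip D₁ g g']
        have hk := key2 h (fun e => hg e.symm : g' ≠ g)
        linarith [hk]
end

section
/- Let p be a prime with p ≡ 5 (mod 8), let ω be a primitive element of 𝔽_p, and set C_i = ω^i⟨ω⁴⟩ for i = 0,1,2,3 (subscripts read modulo 4). Then for every i ∈ {0,1,2,3}, the sets C_i ∪ C_{i+1} and C_{i+1} ∪ C_{i+2} are (p, (p−1)/2, (p−3)/2) supplementary difference sets in the additive group of 𝔽_p. -/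
/-- The coset `C_i = ω^i ⟨ω⁴⟩` of the subgroup `⟨ω⁴⟩` of `𝔽_p^×`, viewed inside `𝔽_p`. -/
noncomputable def Cset (p : ℕ) [NeZero p] (ω : (ZMod p)ˣ) (i : ℕ) : Finset (ZMod p) :=
  open scoped Classical in
  Finset.univ.filter fun x =>
    ∃ c ∈ Subgroup.zpowers (ω ^ 4), x = (ω : ZMod p) ^ i * ((c : (ZMod p)ˣ) : ZMod p)

section Aux

variable {p : ℕ} [Fact p.Prime]

/-- The number of representations of `g` as a difference of two elements of `D`. -/
noncomputable def Ncount (D : Finset (ZMod p)) (g : ZMod p) : ℕ :=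
  ((D ×ˢ D).filter fun xy => xy.1 - xy.2 = g).card

lemma Ncount_neg (D : Finset (ZMod p)) (g : ZMod p) : Ncount D (-g) = Ncount D g := by
  unfold Ncount
  apply Finset.card_bij' (fun xy _ => (xy.2, xy.1)) (fun xy _ => (xy.2, xy.1))
  case hi =>
    intro a ha
    simp only [Finset.mem_filter, Finset.mem_product] at ha ⊢
    exact ⟨⟨ha.1.2, ha.1.1⟩, by linear_combination -ha.2⟩
  case hj =>
    intro a ha
    simp only [Finset.mem_filter, Finset.mem_product] at ha ⊢
    exact ⟨⟨ha.1.2, ha.1.1⟩, by linear_combination -ha.2⟩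
  case left_inv => intro a _; rfl
  case right_inv => intro a _; rfl

lemma Ncount_zero (D : Finset (ZMod p)) : Ncount D 0 = D.card := by
  unfold Ncount
  rw [show ((D ×ˢ D).filter fun xy => xy.1 - xy.2 = 0) = D.image (fun x => (x,x)) by
    ext ⟨a,b⟩
    simp only [Finset.mem_filter, Finset.mem_product, Finset.mem_image, sub_eq_zero,
      Prod.mk.injEq]
    constructor
    · rintro ⟨⟨h1,h2⟩, rfl⟩; exact ⟨a, h1, rfl, rfl⟩
    · rintro ⟨x, hx, rfl, rfl⟩; exact ⟨⟨hx, hx⟩, rfl⟩]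
  rw [Finset.card_image_of_injective _ (fun a b h => (Prod.mk.injEq _ _ _ _ ▸ h).1)]

lemma sum_Ncount (D : Finset (ZMod p)) : ∑ g : ZMod p, Ncount D g = D.card ^ 2 := by
  unfold Ncount
  rw [← Finset.card_eq_sum_card_fiberwise (fun x _ => Finset.mem_univ (x.1 - x.2))]
  rw [Finset.card_product, sq]

lemma Ncount_mul (u : (ZMod p)ˣ) (D E : Finset (ZMod p))
    (h : ∀ x : ZMod p, x ∈ D ↔ (u : ZMod p) * x ∈ E) (g : ZMod p) :
    Ncount E ((u : ZMod p) * g) = Ncount D g := by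
  have hu : (u : ZMod p) ≠ 0 := u.ne_zero
  unfold Ncount
  apply Finset.card_bij' (fun xy _ => ((u : ZMod p)⁻¹ * xy.1, (u : ZMod p)⁻¹ * xy.2))
    (fun xy _ => ((u : ZMod p) * xy.1, (u : ZMod p) * xy.2))
  case hi =>
    intro a ha
    simp only [Finset.mem_filter, Finset.mem_product] at ha ⊢
    obtain ⟨⟨h1, h2⟩, h3⟩ := ha
    refine ⟨⟨(h _).2 (by rw [mul_inv_cancel_left₀ hu]; exact h1),
      (h _).2 (by rw [mul_inv_cancel_left₀ hu]; exact h2)⟩, ?_⟩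
    field_simp
    linear_combination h3
  case hj =>
    intro a ha
    simp only [Finset.mem_filter, Finset.mem_product] at ha ⊢
    obtain ⟨⟨h1, h2⟩, h3⟩ := ha
    exact ⟨⟨(h _).1 h1, (h _).1 h2⟩, by rw [← h3]; ring⟩
  case left_inv =>
    intro a _
    exact Prod.ext (mul_inv_cancel_left₀ hu _) (mul_inv_cancel_left₀ hu _)
  case right_inv =>
    intro a _
    exact Prod.ext (inv_mul_cancel_left₀ hu _) (inv_mul_cancel_left₀ hu _)

lemma mem_Cset {ω : (ZMod p)ˣ} {j : ℕ} {x : ZMod p} :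
    x ∈ Cset p ω j ↔ ∃ n : ℤ, x = ((ω ^ j * (ω ^ 4) ^ n : (ZMod p)ˣ) : ZMod p) := by
  classical
  simp only [Cset, Finset.mem_filter, Finset.mem_univ, true_and, Subgroup.mem_zpowers_iff]
  constructor
  · rintro ⟨c, ⟨n, rfl⟩, rfl⟩
    exact ⟨n, by push_cast; ring⟩
  · rintro ⟨n, rfl⟩
    exact ⟨(ω ^ 4) ^ n, ⟨n, rfl⟩, by push_cast; ring⟩

lemma mem_Cset_succ {ω : (ZMod p)ˣ} {j : ℕ} {x : ZMod p} :
    x ∈ Cset p ω j ↔ (ω : ZMod p) * x ∈ Cset p ω (j + 1) := by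
  rw [mem_Cset, mem_Cset]
  constructor
  · rintro ⟨n, rfl⟩; exact ⟨n, by push_cast; ring⟩
  · rintro ⟨n, hn⟩
    refine ⟨n, ?_⟩
    have hω : (ω : ZMod p) ≠ 0 := ω.ne_zero
    have h : (ω : ZMod p) * x = (ω : ZMod p) * ((ω ^ j * (ω ^ 4) ^ n : (ZMod p)ˣ) : ZMod p) := by
      rw [hn]; push_cast; ring
    exact mul_left_cancel₀ hω h

lemma mem_Cset_pow4 {ω : (ZMod p)ˣ} {j : ℕ} {x : ZMod p} :
    x ∈ Cset p ω j ↔ ((ω ^ 4 : (ZMod p)ˣ) : ZMod p) * x ∈ Cset p ω j := by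
  rw [mem_Cset, mem_Cset]
  constructor
  · rintro ⟨n, rfl⟩; exact ⟨n + 1, by rw [zpow_add_one]; push_cast; ring⟩
  · rintro ⟨n, hn⟩
    refine ⟨n - 1, ?_⟩
    have hω : ((ω ^ 4 : (ZMod p)ˣ) : ZMod p) ≠ 0 := (ω ^ 4).ne_zero
    apply mul_left_cancel₀ hω
    rw [hn, zpow_sub_one]
    push_cast
    field_simp

lemma orderOf_omega (ω : (ZMod p)ˣ) (hω : ∀ x : (ZMod p)ˣ, x ∈ Subgroup.zpowers ω) :
    orderOf ω = p - 1 := by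
  rw [orderOf_eq_card_of_forall_mem_zpowers hω, Nat.card_eq_fintype_card,
    ZMod.card_units_eq_totient, Nat.totient_prime (Fact.out : p.Prime)]

lemma card_Cset (ω : (ZMod p)ˣ) (hω : ∀ x : (ZMod p)ˣ, x ∈ Subgroup.zpowers ω)
    (hp : p % 8 = 5) (j : ℕ) : (Cset p ω j).card = (p - 1) / 4 := by
  classical
  have hord : orderOf ω = p - 1 := orderOf_omega ω hω
  have h4 : (4 : ℕ) ∣ p - 1 := by omega
  have himg : Cset p ω j =
      Finset.image (fun c : Subgroup.zpowers (ω ^ 4) =>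
        ((ω ^ j * (c : (ZMod p)ˣ) : (ZMod p)ˣ) : ZMod p)) Finset.univ := by
    ext x
    simp only [Cset, Finset.mem_filter, Finset.mem_univ, true_and, Finset.mem_image]
    constructor
    · rintro ⟨c, hc, rfl⟩
      exact ⟨⟨c, hc⟩, by push_cast; ring⟩
    · rintro ⟨⟨c, hc⟩, -, rfl⟩
      exact ⟨c, hc, by push_cast; ring⟩
  have hinj : Function.Injective (fun c : Subgroup.zpowers (ω ^ 4) =>
      ((ω ^ j * (c : (ZMod p)ˣ) : (ZMod p)ˣ) : ZMod p)) := by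
    intro a b hab
    have h1 : (ω ^ j * (a : (ZMod p)ˣ) : (ZMod p)ˣ) = ω ^ j * (b : (ZMod p)ˣ) := Units.ext hab
    exact Subtype.ext (mul_left_cancel h1)
  rw [himg, Finset.card_image_of_injective _ hinj, Finset.card_univ,
    Fintype.card_zpowers, orderOf_pow, hord, Nat.gcd_eq_right h4]

lemma disj_Cset (ω : (ZMod p)ˣ) (hω : ∀ x : (ZMod p)ˣ, x ∈ Subgroup.zpowers ω)
    (hp : p % 8 = 5) (j : ℕ) : Disjoint (Cset p ω j) (Cset p ω (j + 1)) := by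
  rw [Finset.disjoint_left]
  intro x hx hx'
  obtain ⟨n, rfl⟩ := mem_Cset.1 hx
  obtain ⟨m, hm⟩ := mem_Cset.1 hx'
  have hU : (ω ^ j * (ω ^ 4) ^ n : (ZMod p)ˣ) = ω ^ (j + 1) * (ω ^ 4) ^ m := Units.ext hm
  have h2 : (ω ^ 4 : (ZMod p)ˣ) ^ n = ω * (ω ^ 4) ^ m := by
    apply mul_left_cancel (a := (ω : (ZMod p)ˣ) ^ j)
    rw [hU, pow_succ]
    group
  have h3 : (ω : (ZMod p)ˣ) ^ (4 * n - 4 * m - 1 : ℤ) = 1 := by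
    have : ((ω ^ 4 : (ZMod p)ˣ) ^ n) * ((ω ^ 4 : (ZMod p)ˣ) ^ m)⁻¹ * ω⁻¹ = 1 := by
      rw [h2]; group
    rw [← this]; group
  have hdvd : ((p - 1 : ℕ) : ℤ) ∣ (4 * n - 4 * m - 1) := by
    rw [← orderOf_omega ω hω]
    exact orderOf_dvd_iff_zpow_eq_one.mpr h3
  obtain ⟨k, hk⟩ := hdvd
  have hq : ((p - 1 : ℕ) : ℤ) = 2 * (4 * ((p - 5) / 8 : ℕ) + 2) := by
    have h5 : 5 ≤ p := by omega
    push_cast [Nat.cast_sub (by omega : 1 ≤ p)]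
    have : (8 : ℕ) ∣ p - 5 := by omega
    omega
  rw [hq] at hk
  set w := (4 * ((p - 5) / 8 : ℕ) + 2 : ℤ) * k with hw
  have : 4 * n - 4 * m - 1 = 2 * w := by rw [hw]; linarith [hk]
  omega

end Aux

/-- for a prime `p ≡ 5 (mod 8)`, a primitive element `ω` of `𝔽_p` and every
`i ∈ {0, 1, 2, 3}` (subscripts of the cosets `C_i = ω^i ⟨ω⁴⟩` read modulo 4), the sets
`C_i ∪ C_{i+1}` and `C_{i+1} ∪ C_{i+2}` are `(p, (p-1)/2, (p-3)/2)` supplementary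
difference sets in the additive group of `𝔽_p`. -/
theorem cosets_union_isSDS (p : ℕ) [Fact p.Prime] (hp : p % 8 = 5)
    (ω : (ZMod p)ˣ) (hω : ∀ x : (ZMod p)ˣ, x ∈ Subgroup.zpowers ω)
    (i : ℕ) (hi : i < 4) :
    IsSDS p ((p - 1) / 2) ((p - 3) / 2)
      (Cset p ω i ∪ Cset p ω (i + 1)) (Cset p ω (i + 1) ∪ Cset p ω (i + 2)) := by
  classical
  obtain ⟨s, hs⟩ : ∃ s, p = 8 * s + 5 := ⟨(p - 5) / 8, by omega⟩
  have hord : orderOf ω = p - 1 := orderOf_omega ω hω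
  set D₁ := Cset p ω i ∪ Cset p ω (i + 1) with hD₁def
  set D₂ := Cset p ω (i + 1) ∪ Cset p ω (i + 2) with hD₂def
  set k := (p - 1) / 2 with hkdef
  have hk : k = 4 * s + 2 := by omega
  have hcard1 : D₁.card = k := by
    rw [hD₁def, Finset.card_union_of_disjoint (disj_Cset ω hω hp i),
      card_Cset ω hω hp, card_Cset ω hω hp]
    omega
  have hcard2 : D₂.card = k := by
    rw [hD₂def, Finset.card_union_of_disjoint (disj_Cset ω hω hp (i + 1)),
      card_Cset ω hω hp, card_Cset ω hω hp]
    omega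
  refine ⟨ZMod.card p, hcard1, hcard2, ?_⟩
  intro g hg
  -- the basic translation facts
  have hD12 : ∀ x : ZMod p, x ∈ D₁ ↔ (ω : ZMod p) * x ∈ D₂ := by
    intro x
    simp only [hD₁def, hD₂def, Finset.mem_union]
    constructor
    · rintro (h | h)
      · exact Or.inl (mem_Cset_succ.1 h)
      · exact Or.inr (mem_Cset_succ.1 h)
    · rintro (h | h)
      · exact Or.inl (mem_Cset_succ.2 h)
      · exact Or.inr (mem_Cset_succ.2 h)
  have hD4 : ∀ x : ZMod p, x ∈ D₁ ↔ ((ω ^ 4 : (ZMod p)ˣ) : ZMod p) * x ∈ D₁ := by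
    intro x
    simp only [hD₁def, Finset.mem_union]
    constructor
    · rintro (h | h)
      · exact Or.inl (mem_Cset_pow4.1 h)
      · exact Or.inr (mem_Cset_pow4.1 h)
    · rintro (h | h)
      · exact Or.inl (mem_Cset_pow4.2 h)
      · exact Or.inr (mem_Cset_pow4.2 h)
  -- invariance under multiplication by ω⁴ (iterated)
  have NA : ∀ (m : ℕ) (x : ZMod p),
      Ncount D₁ (((ω ^ (4 * m) : (ZMod p)ˣ) : ZMod p) * x) = Ncount D₁ x := by
    intro m
    induction m with
    | zero => intro x; simp
    | succ m ih =>
      intro x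
      have e : ((ω ^ (4 * (m + 1)) : (ZMod p)ˣ) : ZMod p) * x
          = ((ω ^ 4 : (ZMod p)ˣ) : ZMod p) * (((ω ^ (4 * m) : (ZMod p)ˣ) : ZMod p) * x) := by
        have : 4 * (m + 1) = 4 + 4 * m := by ring
        rw [this, pow_add]
        push_cast
        ring
      rw [e, Ncount_mul (ω ^ 4) D₁ D₁ hD4, ih]
  -- `-1 = ω ^ ((p-1)/2)`
  have hneg1 : ((ω ^ (4 * s + 2) : (ZMod p)ˣ) : ZMod p) = -1 := by
    have hsq : ((ω ^ (4 * s + 2) : (ZMod p)ˣ) : ZMod p) *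
        ((ω ^ (4 * s + 2) : (ZMod p)ˣ) : ZMod p) = 1 := by
      have : (ω ^ (4 * s + 2) : (ZMod p)ˣ) * ω ^ (4 * s + 2) = 1 := by
        rw [← pow_add]
        have : (4 * s + 2) + (4 * s + 2) = p - 1 := by omega
        rw [this, ← hord, pow_orderOf_eq_one]
      calc ((ω ^ (4 * s + 2) : (ZMod p)ˣ) : ZMod p) * ((ω ^ (4 * s + 2) : (ZMod p)ˣ) : ZMod p)
          = (((ω ^ (4 * s + 2) * ω ^ (4 * s + 2)) : (ZMod p)ˣ) : ZMod p) := by push_cast; ring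
        _ = 1 := by rw [this]; simp

    rcases mul_self_eq_one_iff.1 hsq with h1 | h1
    · exfalso
      have hu : (ω ^ (4 * s + 2) : (ZMod p)ˣ) = 1 := Units.ext (by rw [h1]; rfl)
      have := orderOf_dvd_of_pow_eq_one hu
      rw [hord] at this
      have := Nat.le_of_dvd (by omega) this
      omega
    · exact h1
  -- invariance under multiplication by ω²
  have NB : ∀ x : ZMod p,
      Ncount D₁ (((ω ^ 2 : (ZMod p)ˣ) : ZMod p) * x) = Ncount D₁ x := by
    intro x
    have h1 : -(((ω ^ 2 : (ZMod p)ˣ) : ZMod p) * x)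
        = ((ω ^ (4 * (s + 1)) : (ZMod p)ˣ) : ZMod p) * x := by
      have e : (ω ^ (4 * (s + 1)) : (ZMod p)ˣ) = ω ^ (4 * s + 2) * ω ^ 2 := by
        have h44 : 4 * (s + 1) = (4 * s + 2) + 2 := by ring
        rw [h44, pow_add]
      rw [e, Units.val_mul, hneg1]
      ring
    calc Ncount D₁ (((ω ^ 2 : (ZMod p)ˣ) : ZMod p) * x)
        = Ncount D₁ (-(((ω ^ 2 : (ZMod p)ˣ) : ZMod p) * x)) := (Ncount_neg _ _).symm
      _ = Ncount D₁ (((ω ^ (4 * (s + 1)) : (ZMod p)ˣ) : ZMod p) * x) := by rw [h1]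
      _ = Ncount D₁ x := NA (s + 1) x
  have hω0 : (ω : ZMod p) ≠ 0 := ω.ne_zero
  -- the combined count
  set T : ZMod p → ℕ := fun x => Ncount D₁ x + Ncount D₁ ((ω : ZMod p)⁻¹ * x) with hT
  have hstep : ∀ x : ZMod p, T ((ω : ZMod p) * x) = T x := by
    intro x
    have e1 : (ω : ZMod p)⁻¹ * ((ω : ZMod p) * x) = x := inv_mul_cancel_left₀ hω0 x
    have e2 : (ω : ZMod p) * x = ((ω ^ 2 : (ZMod p)ˣ) : ZMod p) * ((ω : ZMod p)⁻¹ * x) := by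
      push_cast
      field_simp
    simp only [hT]
    rw [e1, e2, NB]
    ring
  have hconst : ∀ u : (ZMod p)ˣ, T ((u : (ZMod p)ˣ) : ZMod p) = T 1 := by
    have key : ∀ n : ℕ, T ((ω ^ n : (ZMod p)ˣ) : ZMod p) = T 1 := by
      intro n
      induction n with
      | zero => norm_num
      | succ n ih =>
        have e : ((ω ^ (n + 1) : (ZMod p)ˣ) : ZMod p)
            = (ω : ZMod p) * ((ω ^ n : (ZMod p)ˣ) : ZMod p) := by
          rw [pow_succ]; push_cast; ring
        rw [e, hstep, ih]
    intro u
    obtain ⟨n, rfl⟩ := mem_powers_iff_mem_zpowers.2 (hω u)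
    exact key n
  -- summation over all nonzero g
  have hsub : k ^ 2 = k * (k - 1) + k := by
    rcases k with _ | n
    · simp
    · rw [Nat.succ_sub_one, pow_two]; ring
  have hsum1 : ∑ x ∈ Finset.univ.erase (0 : ZMod p), Ncount D₁ x = k * (k - 1) := by
    have h := Finset.sum_erase_add Finset.univ (Ncount D₁) (Finset.mem_univ (0 : ZMod p))
    rw [sum_Ncount, Ncount_zero, hcard1, hsub] at h
    exact Nat.add_right_cancel h
  have hsum2 : ∑ x ∈ Finset.univ.erase (0 : ZMod p), Ncount D₁ ((ω : ZMod p)⁻¹ * x)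
      = ∑ x ∈ Finset.univ.erase (0 : ZMod p), Ncount D₁ x := by
    apply Finset.sum_nbij' (i := fun x => (ω : ZMod p)⁻¹ * x) (j := fun x => (ω : ZMod p) * x)
    · intro a ha
      simp only [Finset.mem_erase, Finset.mem_univ, and_true] at ha ⊢
      exact mul_ne_zero (inv_ne_zero hω0) ha
    · intro a ha
      simp only [Finset.mem_erase, Finset.mem_univ, and_true] at ha ⊢
      exact mul_ne_zero hω0 ha
    · intro a _
      exact mul_inv_cancel_left₀ hω0 a
    · intro a _
      exact inv_mul_cancel_left₀ hω0 a
    · intro a _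
      rfl
  have hsumT : ∑ x ∈ Finset.univ.erase (0 : ZMod p), T x = 2 * (k * (k - 1)) := by
    simp only [hT]
    rw [Finset.sum_add_distrib, hsum1, hsum2, hsum1, two_mul]
  have hcardE : (Finset.univ.erase (0 : ZMod p)).card = 2 * k := by
    rw [Finset.card_erase_of_mem (Finset.mem_univ _), Finset.card_univ, ZMod.card]
    omega
  have hconstsum : ∑ x ∈ Finset.univ.erase (0 : ZMod p), T x = 2 * k * T 1 := by
    rw [Finset.sum_congr rfl (fun x hx => ?_), Finset.sum_const, hcardE, smul_eq_mul]
    have hx0 : x ≠ 0 := (Finset.mem_erase.1 hx).1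
    have : ((Units.mk0 x hx0 : (ZMod p)ˣ) : ZMod p) = x := rfl
    rw [← this, hconst]
  have hT1 : T 1 = k - 1 := by
    have h2k : 0 < 2 * k := by omega
    apply Nat.eq_of_mul_eq_mul_left h2k
    rw [← hconstsum, hsumT]
    ring
  -- conclude
  have hND2 : Ncount D₂ g = Ncount D₁ ((ω : ZMod p)⁻¹ * g) := by
    have h := Ncount_mul ω D₁ D₂ hD12 ((ω : ZMod p)⁻¹ * g)
    rw [mul_inv_cancel_left₀ hω0] at h
    exact h
  show Ncount D₁ g + Ncount D₂ g = (p - 3) / 2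
  rw [hND2]
  have : T g = (p - 3) / 2 := by
    have hgu : ((Units.mk0 g hg : (ZMod p)ˣ) : ZMod p) = g := rfl
    rw [← hgu, hconst, hT1]
    omega
  simpa only [hT] using this
end

section
/- Let p be a prime with p ≡ 5 (mod 24), let ω be a primitive element of 𝔽_p, set C_i = ω^i⟨ω⁴⟩ for i = 0,1,2,3 (subscripts read modulo 4), and let ε ∈ {1,3} be the index with −2 ∈ C_ε. Let a ∈ {1,−1}. Then for all s, t ∈ 𝔽_p with s ≠ t: the (s,t) entry of R_X − R_Yᵀ equals 1 if t − s ∈ C₀ ∪ C_ε and equals −1 if t − s ∈ C₂ ∪ C_{ε+2}; and the (s,t) entry of R_Y + R_Xᵀ equals 1 if t − s ∈ C₂ ∪ C_ε and equals −1 if t − s ∈ C₀ ∪ C_{ε+2}. -/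
open Matrix

section Statement12Helpers

variable {p : ℕ} [Fact p.Prime] (ω : (ZMod p)ˣ)

private lemma order_omega' (hω : ∀ x : (ZMod p)ˣ, x ∈ Subgroup.zpowers ω) :
    orderOf ω = p - 1 := by
  rw [orderOf_eq_card_of_forall_mem_zpowers hω, Nat.card_eq_fintype_card,
    ZMod.card_units_eq_totient, Nat.totient_prime Fact.out]

private lemma zpow_eq_iff' (hω : ∀ x : (ZMod p)ˣ, x ∈ Subgroup.zpowers ω) (a b : ℤ) :
    ω ^ a = ω ^ b ↔ ((p - 1 : ℕ) : ℤ) ∣ b - a := by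
  rw [zpow_eq_zpow_iff_modEq, order_omega' ω hω, Int.modEq_iff_dvd]

private lemma two_dvd_iff' (m : ℤ) : (2:ℤ) ∣ m ↔ ((m : ZMod 4) = 0 ∨ (m : ZMod 4) = 2) := by
  have h0 : (m : ZMod 4) = 0 ↔ (4:ℤ) ∣ m := ZMod.intCast_zmod_eq_zero_iff_dvd m 4
  have h2 : (m : ZMod 4) = 2 ↔ (4:ℤ) ∣ m - 2 := by
    rw [← sub_eq_zero]
    have h : ((m - 2 : ℤ) : ZMod 4) = (m : ZMod 4) - 2 := by push_cast; ring
    rw [← h, ZMod.intCast_zmod_eq_zero_iff_dvd]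
    norm_num
  rw [h0, h2]
  omega

private lemma four_dvd_iff' (m : ℤ) : (4:ℤ) ∣ m ↔ (m : ZMod 4) = 0 := by
  rw [ZMod.intCast_zmod_eq_zero_iff_dvd m 4]; norm_num

private lemma key_pow' (m : ℤ) :
    ((ω ^ m : (ZMod p)ˣ) : ZMod p) ^ 2 = ((ω ^ (m * 2) : (ZMod p)ˣ) : ZMod p) := by
  rw [_root_.zpow_mul, ← Units.val_pow_eq_pow_val]
  norm_cast

private lemma condSq' (hω : ∀ x : (ZMod p)ˣ, x ∈ Subgroup.zpowers ω)
    (h2 : (2:ℤ) ∣ ((p - 1 : ℕ) : ℤ)) (n : ℤ) :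
    (∃ c : ZMod p, c ≠ 0 ∧ c ^ 2 = ((ω ^ n : (ZMod p)ˣ) : ZMod p)) ↔ (2:ℤ) ∣ n := by
  constructor
  · rintro ⟨c, hc0, hc⟩
    obtain ⟨m, hm⟩ := Subgroup.mem_zpowers_iff.mp (hω (Units.mk0 c hc0))
    have hm' : ((ω ^ m : (ZMod p)ˣ) : ZMod p) = c := by rw [hm]; rfl
    have hu : ω ^ (m * 2) = ω ^ n := by
      apply Units.ext
      rw [← key_pow', hm']
      exact hc
    obtain ⟨k, hk⟩ := (zpow_eq_iff' ω hω _ _).mp hu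
    obtain ⟨l, hl⟩ := h2
    rw [hl] at hk
    exact ⟨l * k + m, by linarith⟩
  · rintro ⟨m, rfl⟩
    exact ⟨((ω ^ m : (ZMod p)ˣ) : ZMod p), Units.ne_zero _,
      by rw [key_pow']; norm_num [mul_comm]⟩

private lemma condFour' (hω : ∀ x : (ZMod p)ˣ, x ∈ Subgroup.zpowers ω)
    (h4 : (4:ℤ) ∣ ((p - 1 : ℕ) : ℤ)) (n : ℤ) :
    (∃ c : ZMod p, c ≠ 0 ∧ c ^ 2 = ((ω ^ n : (ZMod p)ˣ) : ZMod p) ∧ ∃ d : ZMod p, d ^ 2 = c) ↔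
      (4:ℤ) ∣ n := by
  constructor
  · rintro ⟨c, hc0, hc, d, hd⟩
    have hd0 : d ≠ 0 := by rintro rfl; simp at hd; exact hc0 hd.symm
    obtain ⟨m, hm⟩ := Subgroup.mem_zpowers_iff.mp (hω (Units.mk0 d hd0))
    have hm' : ((ω ^ m : (ZMod p)ˣ) : ZMod p) = d := by rw [hm]; rfl
    have hu : ω ^ (m * 4) = ω ^ n := by
      apply Units.ext
      have h4' : (m * 4 : ℤ) = (m * 2) * 2 := by ring
      rw [h4', ← key_pow']
      have hc' : ((ω ^ (m * 2) : (ZMod p)ˣ) : ZMod p) = c := by rw [← key_pow', hm', hd]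
      rw [hc']
      exact hc
    obtain ⟨k, hk⟩ := (zpow_eq_iff' ω hω _ _).mp hu
    obtain ⟨l, hl⟩ := h4
    rw [hl] at hk
    exact ⟨l * k + m, by linarith⟩
  · rintro ⟨m, rfl⟩
    refine ⟨((ω ^ (m * 2) : (ZMod p)ˣ) : ZMod p), Units.ne_zero _, ?_,
      ((ω ^ m : (ZMod p)ˣ) : ZMod p), by rw [key_pow']⟩
    rw [key_pow', show (m*2*2 : ℤ) = 4*m by ring]

private lemma four_zpow' (k : ℤ) : ((ω ^ 4 : (ZMod p)ˣ) ^ k) = ω ^ (4 * k) := by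
  rw [← zpow_natCast ω 4, ← _root_.zpow_mul]
  norm_num

private lemma memCset' (hω : ∀ x : (ZMod p)ˣ, x ∈ Subgroup.zpowers ω)
    (h4 : (4:ℤ) ∣ ((p - 1 : ℕ) : ℤ)) (i : ℕ) (n : ℤ) :
    ((ω ^ n : (ZMod p)ˣ) : ZMod p) ∈ Cset p ω i ↔ (n : ZMod 4) = (i : ZMod 4) := by
  classical
  simp only [Cset, Finset.mem_filter, Finset.mem_univ, true_and]
  constructor
  · rintro ⟨c, hc, hx⟩
    obtain ⟨k, rfl⟩ := Subgroup.mem_zpowers_iff.mp hc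
    have hu : ω ^ n = ω ^ ((i : ℤ) + 4 * k) := by
      apply Units.ext
      rw [hx, four_zpow', _root_.zpow_add, Units.val_mul, zpow_natCast, Units.val_pow_eq_pow_val]
    obtain ⟨l, hl⟩ := (zpow_eq_iff' ω hω _ _).mp hu
    have hdvd : (4:ℤ) ∣ (n : ℤ) - i := by
      obtain ⟨m, hm⟩ := h4
      rw [hm] at hl
      exact ⟨k - m * l, by linarith⟩
    have h0 : ((n - (i:ℤ) : ℤ) : ZMod 4) = 0 := by
      rw [ZMod.intCast_zmod_eq_zero_iff_dvd]
      exact_mod_cast hdvd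
    push_cast at h0
    linear_combination h0
  · intro h
    have h0 : ((n - (i:ℤ) : ℤ) : ZMod 4) = 0 := by push_cast; rw [h]; ring
    rw [ZMod.intCast_zmod_eq_zero_iff_dvd] at h0
    obtain ⟨k, hk⟩ := h0
    refine ⟨(ω ^ 4) ^ k, ⟨k, rfl⟩, ?_⟩
    rw [four_zpow', show n = (i:ℤ) + 4*k by push_cast at hk ⊢; linarith,
      _root_.zpow_add, Units.val_mul, zpow_natCast, Units.val_pow_eq_pow_val]

private lemma neg_one_rep' (hω : ∀ x : (ZMod p)ˣ, x ∈ Subgroup.zpowers ω) (hp : p % 24 = 5) :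
    ∃ n : ℤ, ω ^ n = (-1 : (ZMod p)ˣ) ∧ ((n : ZMod 4) = 2) := by
  have hple : p % 24 ≤ p := Nat.mod_le _ _
  have hp5 : 5 ≤ p := by omega
  obtain ⟨k, hk⟩ : ∃ k, (p - 1)/2 = 4 * k + 2 := ⟨3 * ((p - 5)/24), by omega⟩
  set e : ℕ := (p - 1)/2 with he
  have hord : orderOf ω = p - 1 := order_omega' ω hω
  have hsq : (ω ^ e) ^ 2 = 1 := by
    rw [← pow_mul, show e * 2 = p - 1 by omega, ← hord, pow_orderOf_eq_one]
  have hne : ω ^ e ≠ 1 := by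
    intro h
    have h1 := orderOf_dvd_iff_pow_eq_one.mpr h
    rw [hord] at h1
    have := Nat.le_of_dvd (by omega) h1
    omega
  have hval : ((ω ^ e : (ZMod p)ˣ) : ZMod p) = -1 := by
    have h2 : ((ω ^ e : (ZMod p)ˣ) : ZMod p) * ((ω ^ e : (ZMod p)ˣ) : ZMod p) = 1 := by
      rw [← Units.val_mul, ← sq, hsq, Units.val_one]
    rcases mul_self_eq_one_iff.mp h2 with h | h
    · exact absurd (Units.ext h) hne
    · exact h
  refine ⟨(e : ℤ), ?_, ?_⟩
  · apply Units.ext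
    rw [zpow_natCast, hval, Units.val_neg, Units.val_one]
  · rw [hk]
    push_cast
    rw [show (4 : ZMod 4) = 0 by rfl]
    ring

private lemma RXval' (hω : ∀ x : (ZMod p)ˣ, x ∈ Subgroup.zpowers ω)
    (h4 : (4:ℤ) ∣ ((p - 1 : ℕ) : ℤ)) (s t : ZMod p) (n : ℤ)
    (hn : ((ω ^ n : (ZMod p)ˣ) : ZMod p) = t - s) :
    RX p s t = if (n : ZMod 4) = 0 then 1 else if (n : ZMod 4) = 2 then -1 else 0 := by
  have h2 : (2:ℤ) ∣ ((p - 1 : ℕ) : ℤ) := dvd_trans ⟨2, by norm_num⟩ h4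
  classical
  simp only [RX, Matrix.of_apply]
  rw [← hn]
  by_cases h0 : (n : ZMod 4) = 0
  · rw [if_pos ((condFour' ω hω h4 n).mpr ((four_dvd_iff' n).mpr h0)), if_pos h0]
  · by_cases h2' : (n : ZMod 4) = 2
    · rw [if_neg, if_pos ((condSq' ω hω h2 n).mpr ((two_dvd_iff' n).mpr (Or.inr h2'))),
        if_neg h0, if_pos h2']
      rw [condFour' ω hω h4 n, four_dvd_iff' n]
      exact h0
    · rw [if_neg, if_neg, if_neg h0, if_neg h2']
      · rw [condSq' ω hω h2 n, two_dvd_iff' n]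
        tauto
      · rw [condFour' ω hω h4 n, four_dvd_iff' n]
        exact h0

private lemma RYval' (hω : ∀ x : (ZMod p)ˣ, x ∈ Subgroup.zpowers ω)
    (h4 : (4:ℤ) ∣ ((p - 1 : ℕ) : ℤ)) (s t : ZMod p) (n : ℤ)
    (hn : ((ω ^ n : (ZMod p)ˣ) : ZMod p) = 2 * (t - s)) :
    RY p s t = if (n : ZMod 4) = 0 then 1 else if (n : ZMod 4) = 2 then -1 else 0 := by
  have h2 : (2:ℤ) ∣ ((p - 1 : ℕ) : ℤ) := dvd_trans ⟨2, by norm_num⟩ h4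
  classical
  simp only [RY, Matrix.of_apply]
  rw [← hn]
  by_cases h0 : (n : ZMod 4) = 0
  · rw [if_pos ((condFour' ω hω h4 n).mpr ((four_dvd_iff' n).mpr h0)), if_pos h0]
  · by_cases h2' : (n : ZMod 4) = 2
    · rw [if_neg, if_pos ((condSq' ω hω h2 n).mpr ((two_dvd_iff' n).mpr (Or.inr h2'))),
        if_neg h0, if_pos h2']
      rw [condFour' ω hω h4 n, four_dvd_iff' n]
      exact h0
    · rw [if_neg, if_neg, if_neg h0, if_neg h2']
      · rw [condSq' ω hω h2 n, two_dvd_iff' n]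
        tauto
      · rw [condFour' ω hω h4 n, four_dvd_iff' n]
        exact h0

end Statement12Helpers

/-- for a prime `p ≡ 5 (mod 24)`, a primitive element `ω` of `𝔽_p`,
`ε ∈ {1, 3}` with `-2 ∈ C_ε`, and `a ∈ {1, -1}`: for all distinct `s, t ∈ 𝔽_p`, the `(s, t)`
entry of `R_X - R_Yᵀ` is `1` if `t - s ∈ C₀ ∪ C_ε` and `-1` if `t - s ∈ C₂ ∪ C_{ε+2}`, and
the `(s, t)` entry of `R_Y + R_Xᵀ` is `1` if `t - s ∈ C₂ ∪ C_ε` and `-1` if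
`t - s ∈ C₀ ∪ C_{ε+2}` (subscripts read modulo 4). -/
theorem entries_of_A'_B' (p : ℕ) [Fact p.Prime] (hp : p % 24 = 5)
    (ω : (ZMod p)ˣ) (hω : ∀ x : (ZMod p)ˣ, x ∈ Subgroup.zpowers ω)
    (ε : ℕ) (hε : ε = 1 ∨ ε = 3) (hm2 : (-2 : ZMod p) ∈ Cset p ω ε)
    (a : ℤ) (ha : a = 1 ∨ a = -1) :
    ∀ s t : ZMod p, s ≠ t →
      (t - s ∈ Cset p ω 0 ∪ Cset p ω ε → (RX p - (RY p)ᵀ) s t = 1) ∧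
      (t - s ∈ Cset p ω 2 ∪ Cset p ω (ε + 2) → (RX p - (RY p)ᵀ) s t = -1) ∧
      (t - s ∈ Cset p ω 2 ∪ Cset p ω ε → (RY p + (RX p)ᵀ) s t = 1) ∧
      (t - s ∈ Cset p ω 0 ∪ Cset p ω (ε + 2) → (RY p + (RX p)ᵀ) s t = -1) := by
  have hple : p % 24 ≤ p := Nat.mod_le _ _
  have hp5 : 5 ≤ p := by omega
  have h4 : (4:ℤ) ∣ ((p - 1 : ℕ) : ℤ) := by
    have h : (4:ℕ) ∣ p - 1 := by omega
    exact_mod_cast Int.natCast_dvd_natCast.mpr h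
  obtain ⟨n2, hn2, hc2⟩ := neg_one_rep' ω hω hp
  have h2ne : (-2 : ZMod p) ≠ 0 := by
    rw [neg_ne_zero, show (2 : ZMod p) = ((2:ℕ) : ZMod p) by norm_cast, Ne,
      ZMod.natCast_eq_zero_iff]
    intro hdvd
    have := Nat.le_of_dvd two_pos hdvd
    omega
  obtain ⟨n1, hn1⟩ := Subgroup.mem_zpowers_iff.mp (hω (Units.mk0 (-2) h2ne))
  have hn1' : ((ω ^ n1 : (ZMod p)ˣ) : ZMod p) = -2 := by rw [hn1]; rfl
  have hc1 : (n1 : ZMod 4) = (ε : ZMod 4) := by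
    rw [← memCset' ω hω h4, hn1']
    exact hm2
  intro s t hst
  have hts : t - s ≠ 0 := sub_ne_zero.mpr (Ne.symm hst)
  obtain ⟨n, hn⟩ := Subgroup.mem_zpowers_iff.mp (hω (Units.mk0 (t - s) hts))
  have hn' : ((ω ^ n : (ZMod p)ˣ) : ZMod p) = t - s := by rw [hn]; rfl
  have hstv : ((ω ^ (n2 + n) : (ZMod p)ˣ) : ZMod p) = s - t := by
    rw [_root_.zpow_add, Units.val_mul, hn2, hn', Units.val_neg, Units.val_one]
    ring
  have h2ts : ((ω ^ (n2 + n1 + n) : (ZMod p)ˣ) : ZMod p) = 2 * (t - s) := by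
    rw [_root_.zpow_add, _root_.zpow_add, Units.val_mul, Units.val_mul, hn2, hn1', hn',
      Units.val_neg, Units.val_one]
    ring
  have h2st : ((ω ^ (n1 + n) : (ZMod p)ˣ) : ZMod p) = 2 * (s - t) := by
    rw [_root_.zpow_add, Units.val_mul, hn1', hn']
    ring
  have eRXst := RXval' ω hω h4 s t n hn'
  have eRXts := RXval' ω hω h4 t s (n2 + n) hstv
  have eRYst := RYval' ω hω h4 s t (n2 + n1 + n) h2ts
  have eRYts := RYval' ω hω h4 t s (n1 + n) h2st
  push_cast at eRXts eRYst eRYts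
  rw [hc2] at eRXts eRYst
  rw [hc1] at eRYst eRYts
  rcases hε with rfl | rfl <;>
    refine ⟨fun h => ?_, fun h => ?_, fun h => ?_, fun h => ?_⟩ <;>
    simp only [Matrix.sub_apply, Matrix.add_apply, Matrix.transpose_apply,
      eRXst, eRYts, eRYst, eRXts] <;>
    rcases Finset.mem_union.mp h with h | h <;>
    rw [← hn', memCset' ω hω h4] at h <;>
    push_cast at h ⊢ <;>
    rw [h] <;>
    decide
end
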